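/- arXiv:1212.6106 — 4 statements merged into one kernel-verified Lean document; each statement's English description precedes it below -/
import Mathlib

section
/- In the max-plus semiring ℝ_{max,+} = (ℝ ∪ {−∞}, max, +), for an n×n matrix A, λ is an eigenvalue with eigenvector x (a nonzero vector satisfying A ⊗ x = λ ⊗ x, i.e., max_j (a_{ij} + x_j) = λ + x_i for all i) only if λ ≤ ⊕_{m=1}^{n} (tr(A^m))^{1/m}, i.e., λ ≤ max_{1≤m≤n} (1/m)·tr(A^m) where trace and powers are tropical. -/
noncomputable section

/-- The carrier of the max-plus semiring `ℝ_{max,+}`: the reals with `−∞` adjoined,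
with tropical addition `⊔ = max` and tropical multiplication `+`. -/
local notation "R" => WithBot ℝ

/-- Max-plus matrix product: `{AB}_{ij} = max_k (a_{ik} + b_{kj})`. -/
def tmul {n : ℕ} (A B : Fin n → Fin n → R) : Fin n → Fin n → R :=
  fun i j => Finset.univ.sup fun k => A i k + B k j

/-- The max-plus identity matrix: `0` on the diagonal, `−∞` elsewhere. -/
def idMat (n : ℕ) : Fin n → Fin n → R :=
  fun i j => if i = j then 0 else ⊥

/-- Max-plus matrix power. -/
def tpow {n : ℕ} (A : Fin n → Fin n → R) : ℕ → (Fin n → Fin n → R)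
  | 0 => idMat n
  | m + 1 => tmul A (tpow A m)

/-- Tropical trace: `tr A = max_i a_{ii}`. -/
def ttr {n : ℕ} (A : Fin n → Fin n → R) : R :=
  Finset.univ.sup fun i => A i i

/-- Max-plus matrix-vector product. -/
def matVec {n : ℕ} (A : Fin n → Fin n → R) (x : Fin n → R) : Fin n → R :=
  fun i => Finset.univ.sup fun k => A i k + x k

/-- The tropical `m`-th root of a scalar: `t^{1/m} = t/m` in conventional arithmetic. -/
def troot (m : ℕ) (t : R) : R := t.map fun r => r / m

/-- The tropical spectral radius `λ = ⊕_{m=1}^n tr^{1/m}(A^m)`. -/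
def specRad {n : ℕ} (A : Fin n → Fin n → R) : R :=
  (Finset.Icc 1 n).sup fun m => troot m (ttr (tpow A m))

/-- A matrix is irreducible iff its digraph (of non-`−∞` entries) is strongly connected,
equivalently every pair `(i, j)` is connected by a path of some positive length `m`. -/
def Irred {n : ℕ} (A : Fin n → Fin n → R) : Prop :=
  ∀ i j : Fin n, ∃ m : ℕ, 1 ≤ m ∧ tpow A m i j ≠ ⊥

/-- `Tr(A) = tr A ⊕ ⋯ ⊕ tr Aⁿ`. -/
def Tr {n : ℕ} (A : Fin n → Fin n → R) : R :=
  (Finset.Icc 1 n).sup fun m => ttr (tpow A m)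

/-- The Kleene star `A* = I ⊕ A ⊕ ⋯ ⊕ A^{n−1}`. -/
def star {n : ℕ} (A : Fin n → Fin n → R) : Fin n → Fin n → R :=
  fun i j => (Finset.range n).sup fun m => tpow A m i j

/-- The regular vector `x ∈ ℝⁿ` viewed in `(ℝ ∪ {−∞})ⁿ`. -/
def vec {n : ℕ} (x : Fin n → ℝ) : Fin n → R := fun i => (x i : R)

/-- The objective function `x⁻ A x = max_{i,j} (−x_i + a_{ij} + x_j)` for regular `x`. -/
def quadForm {n : ℕ} (A : Fin n → Fin n → R) (x : Fin n → ℝ) : R :=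
  Finset.univ.sup fun p : Fin n × Fin n => ((-(x p.1) : ℝ) : R) + A p.1 p.2 + ((x p.2 : ℝ) : R)

/-- Tropical division `a ⊗ t⁻¹`, i.e. conventional `a − t`, with value `−∞`
whenever `a = −∞` or `t = −∞`. -/
def tdiv (a t : R) : R :=
  WithBot.recBotCoe ⊥ (fun r => t.map fun s => r - s) a

/-- The weight of any path of length `m` is at most the corresponding entry of `A^m`. -/
lemma path_weight_le_tpow {n : ℕ} (A : Fin n → Fin n → R) :
    ∀ (m : ℕ) (p : ℕ → Fin n),
      (∑ t ∈ Finset.range m, A (p t) (p (t + 1))) ≤ tpow A m (p 0) (p m) := by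
  intro m
  induction m with
  | zero => intro p; simp [tpow, idMat]
  | succ m ih =>
    intro p
    rw [Finset.sum_range_succ']
    have h1 : (∑ t ∈ Finset.range m, A (p (t + 1)) (p (t + 1 + 1)))
        ≤ tpow A m (p 1) (p (m + 1)) := ih (fun t => p (t + 1))
    calc (∑ t ∈ Finset.range m, A (p (t + 1)) (p (t + 1 + 1))) + A (p 0) (p 1)
        ≤ tpow A m (p 1) (p (m + 1)) + A (p 0) (p 1) := add_le_add h1 le_rfl
      _ = A (p 0) (p 1) + tpow A m (p 1) (p (m + 1)) := add_comm _ _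
      _ ≤ tpow A (m + 1) (p 0) (p (m + 1)) := by
          show _ ≤ tmul A (tpow A m) (p 0) (p (m + 1))
          exact Finset.le_sup (f := fun k => A (p 0) k + tpow A m k (p (m + 1)))
            (Finset.mem_univ (p 1))

/-- Any max-plus eigenvalue of `A` is bounded by `max_{1 <= m <= n} (1/m) tr(A^m)`. -/
theorem eigenvalue_le_specRad {n : ℕ} (hn : 0 < n) (A : Fin n → Fin n → R)
    (lam : R) (x : Fin n → R) (hx : ∃ i, x i ≠ ⊥)
    (heig : ∀ i, matVec A x i = lam + x i) :
    lam ≤ specRad A := by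
  rcases eq_or_ne lam ⊥ with hl | hl
  · simp [hl]
  obtain ⟨l, rfl⟩ := WithBot.ne_bot_iff_exists.mp hl
  obtain ⟨i0, hi0⟩ := hx
  -- one step: from a finite coordinate we can move along a finite edge
  have step : ∀ i : Fin n, x i ≠ ⊥ →
      ∃ j : Fin n, A i j + x j = (l : R) + x i ∧ x j ≠ ⊥ := by
    intro i hi
    have : Nonempty (Fin n) := ⟨⟨0, hn⟩⟩
    have hne : (Finset.univ : Finset (Fin n)).Nonempty := Finset.univ_nonempty
    obtain ⟨j, -, hj⟩ := Finset.exists_mem_eq_sup Finset.univ hne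
      (fun k => A i k + x k)
    refine ⟨j, ?_, ?_⟩
    · rw [← hj]; exact (heig i)
    · have h1 : A i j + x j = (l : R) + x i := by rw [← hj]; exact heig i
      have h2 : A i j + x j ≠ ⊥ := by
        rw [h1]; exact WithBot.add_ne_bot.mpr ⟨WithBot.coe_ne_bot, hi⟩
      exact (WithBot.add_ne_bot.mp h2).2
  choose f hf1 hf2 using step
  -- build the infinite path of finite coordinates
  let p : ℕ → {i : Fin n // x i ≠ ⊥} := fun t =>
    Nat.rec ⟨i0, hi0⟩ (fun _ q => ⟨f q.1 q.2, hf2 q.1 q.2⟩) t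
  have hpstep : ∀ t, A (p t).1 (p (t + 1)).1 + x (p (t + 1)).1
      = (l : R) + x (p t).1 := fun t => hf1 (p t).1 (p t).2
  -- extract real values
  have hy : ∀ t, ∃ r : ℝ, x (p t).1 = (r : R) := fun t =>
    WithBot.ne_bot_iff_exists.mp (p t).2 |>.imp fun r h => h.symm
  choose y hyx using hy
  have hAne : ∀ t, A (p t).1 (p (t + 1)).1 ≠ ⊥ := by
    intro t
    have h2 : A (p t).1 (p (t + 1)).1 + x (p (t + 1)).1 ≠ ⊥ := by
      rw [hpstep t]; exact WithBot.add_ne_bot.mpr ⟨WithBot.coe_ne_bot, (p t).2⟩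
    exact (WithBot.add_ne_bot.mp h2).1
  have hc : ∀ t, ∃ r : ℝ, A (p t).1 (p (t + 1)).1 = (r : R) := fun t =>
    WithBot.ne_bot_iff_exists.mp (hAne t) |>.imp fun r h => h.symm
  choose c hcA using hc
  -- the real equation along the path
  have hceq : ∀ t, c t = l + y t - y (t + 1) := by
    intro t
    have := hpstep t
    rw [hcA t, hyx t, hyx (t + 1), ← WithBot.coe_add, ← WithBot.coe_add] at this
    have := WithBot.coe_inj.mp this
    linarith
  -- pigeonhole: the path revisits a vertex within n+1 steps
  have hmaps : ∀ t ∈ Finset.range (n + 1), (p t).1 ∈ (Finset.univ : Finset (Fin n)) :=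
    fun t _ => Finset.mem_univ _
  have hcard : (Finset.univ : Finset (Fin n)).card < (Finset.range (n + 1)).card := by
    simp
  obtain ⟨a, ha, b, hb, hab, hpab⟩ :=
    Finset.exists_ne_map_eq_of_card_lt_of_maps_to hcard hmaps
  -- wlog a < b
  wlog hlt : a < b generalizing a b
  · exact this b hb a ha hab.symm hpab.symm (by omega)
  set m : ℕ := b - a with hm
  have hm1 : 1 ≤ m := by omega
  have hmn : m ≤ n := by
    have := Finset.mem_range.mp hb; omega
  have hbam : a + m = b := by omega
  -- y a = y b
  have hyab : y a = y b := by
    have : (y a : R) = (y b : R) := by rw [← hyx a, ← hyx b, hpab]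
    exact WithBot.coe_inj.mp this
  -- sum of cycle weights is m * l
  have hsum : ∑ t ∈ Finset.range m, c (a + t) = m * l := by
    have he : ∀ t, c (a + t) = l + ((fun s => y (a + s)) t - (fun s => y (a + s)) (t + 1)) := by
      intro t
      have := hceq (a + t)
      simp only [Nat.add_assoc] at this ⊢
      linarith
    calc ∑ t ∈ Finset.range m, c (a + t)
        = ∑ t ∈ Finset.range m,
            (l + ((fun s => y (a + s)) t - (fun s => y (a + s)) (t + 1))) := by
          exact Finset.sum_congr rfl fun t _ => he t
      _ = m * l + (y (a + 0) - y (a + m)) := by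
          rw [Finset.sum_add_distrib, Finset.sum_const, Finset.sum_range_sub']
          simp [nsmul_eq_mul]
      _ = m * l := by
          rw [hbam]; simp [hyab]
  -- the cycle weight bounds tr(A^m)
  have hpath := path_weight_le_tpow A m (fun t => (p (a + t)).1)
  have hsumcast : (∑ t ∈ Finset.range m, A (p (a + t)).1 (p (a + t + 1)).1)
      = ((m * l : ℝ) : R) := by
    rw [← hsum]
    rw [WithBot.coe_sum]
    refine Finset.sum_congr rfl fun t _ => ?_
    rw [← hcA (a + t)]
  have hpa0 : (p (a + 0)).1 = (p a).1 := by norm_num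
  have hpam : (p (a + m)).1 = (p a).1 := by rw [hbam, ← hpab]
  have htr : ((m * l : ℝ) : R) ≤ ttr (tpow A m) := by
    have h1 : ((m * l : ℝ) : R) ≤ tpow A m (p a).1 (p a).1 := by
      rw [← hsumcast]
      have := hpath
      simp only [Nat.add_assoc] at this ⊢
      rwa [hpa0, hpam] at this
    exact h1.trans (Finset.le_sup (f := fun i => tpow A m i i) (Finset.mem_univ (p a).1))
  -- conclude: l ≤ troot m (tr (A^m)) ≤ specRad A
  have hne : ttr (tpow A m) ≠ ⊥ := fun h => by
    rw [h] at htr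
    exact absurd (le_bot_iff.mp htr) WithBot.coe_ne_bot
  obtain ⟨T, hT⟩ := WithBot.ne_bot_iff_exists.mp hne
  have hTl : m * l ≤ T := by
    rw [← hT] at htr
    exact_mod_cast htr
  have hroot : (l : R) ≤ troot m (ttr (tpow A m)) := by
    rw [← hT]
    show (l : R) ≤ ((T / m : ℝ) : R)
    rw [WithBot.coe_le_coe]
    rw [le_div_iff₀ (by exact_mod_cast hm1 : (0 : ℝ) < m)]
    linarith
  refine hroot.trans ?_
  exact Finset.le_sup (f := fun k => troot k (ttr (tpow A k)))
    (Finset.mem_Icc.mpr ⟨hm1, hmn⟩)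
end
end

section
/- (Extremal property of the tropical spectral radius) For an irreducible n×n matrix A over the max-plus semiring, min over all regular vectors x of x⁻ A x equals λ = ⊕_{m=1}^{n} tr^{1/m}(A^m), i.e., min_x max_{i,j}(a_{ij} + x_j − x_i) = max_{1≤m≤n} (1/m) tr(A^m). -/
noncomputable section

/-- The carrier of the max-plus semiring `ℝ_{max,+}`: the reals with `−∞` adjoined,
with tropical addition `⊔ = max` and tropical multiplication `+`. -/
local notation "R" => WithBot ℝ

/-! ### Auxiliary lemmas -/

namespace TropAux

/-- weight of walk `f` along edges from step `s` to step `t`. -/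
def weight {n : ℕ} (A : Fin n → Fin n → R) (f : ℕ → Fin n) (s t : ℕ) : R :=
  ∑ k ∈ Finset.Ico s t, A (f k) (f (k+1))

lemma sup_add {n : ℕ} [Nonempty (Fin n)] (f : Fin n → R) (c : R) :
    Finset.univ.sup f + c = Finset.univ.sup fun k => f k + c := by
  apply le_antisymm
  · obtain ⟨k, -, hk⟩ := Finset.exists_mem_eq_sup Finset.univ Finset.univ_nonempty f
    rw [hk]
    exact Finset.le_sup (f := fun k => f k + c) (Finset.mem_univ k)
  · exact Finset.sup_le fun k _ => add_le_add_left (Finset.le_sup (Finset.mem_univ k)) c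

lemma weight_shift {n : ℕ} (A : Fin n → Fin n → R) (f : ℕ → Fin n) (d s t : ℕ) :
    weight A (fun k => f (k + d)) s t = weight A f (s + d) (t + d) := by
  unfold weight
  rw [Finset.sum_Ico_eq_sum_range, Finset.sum_Ico_eq_sum_range]
  have h : t + d - (s + d) = t - s := by omega
  rw [h]
  apply Finset.sum_congr rfl
  intro k _
  show A (f (s + k + d)) (f (s + k + 1 + d)) = A (f (s + d + k)) (f (s + d + k + 1))
  have h1 : s + k + d = s + d + k := by omega
  have h2 : s + k + 1 + d = s + d + k + 1 := by omega
  rw [h1, h2]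

lemma weight_le_tpow {n : ℕ} (A : Fin n → Fin n → R) (f : ℕ → Fin n) :
    ∀ m s, weight A f s (s + m) ≤ tpow A m (f s) (f (s + m)) := by
  intro m
  induction m with
  | zero =>
    intro s
    simp [weight, tpow, idMat]
  | succ m ih =>
    intro s
    have hsplit : weight A f s (s + (m+1)) = A (f s) (f (s+1)) + weight A f (s+1) (s+1+m) := by
      unfold weight
      rw [Finset.sum_eq_sum_Ico_succ_bot (by omega)]
      congr 1
      apply Finset.sum_congr
      · congr 1; omega
      · intros; rfl
    rw [hsplit]
    have h1 : weight A f (s+1) (s+1+m) ≤ tpow A m (f (s+1)) (f (s+1+m)) := ih (s+1)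
    have h2 : A (f s) (f (s+1)) + weight A f (s+1) (s+1+m)
        ≤ A (f s) (f (s+1)) + tpow A m (f (s+1)) (f (s+1+m)) := add_le_add_right h1 _
    refine h2.trans ?_
    have : s + (m + 1) = s + 1 + m := by omega
    rw [this]
    exact Finset.le_sup (f := fun k => A (f s) k + tpow A m k (f (s+1+m))) (Finset.mem_univ (f (s+1)))

lemma tpow_le_weight {n : ℕ} (A : Fin n → Fin n → R) :
    ∀ m (i j : Fin n), tpow A m i j ≠ ⊥ →
      ∃ f : ℕ → Fin n, f 0 = i ∧ f m = j ∧ tpow A m i j ≤ weight A f 0 m := by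
  intro m
  induction m with
  | zero =>
    intro i j h
    by_cases hij : i = j
    · subst hij
      exact ⟨fun _ => i, rfl, rfl, by simp [weight, tpow, idMat]⟩
    · simp [tpow, idMat, hij] at h
  | succ m ih =>
    intro i j h
    haveI : Nonempty (Fin n) := ⟨i⟩
    obtain ⟨k, -, hk⟩ := Finset.exists_mem_eq_sup Finset.univ Finset.univ_nonempty
      (fun k => A i k + tpow A m k j)
    have heq : tpow A (m+1) i j = A i k + tpow A m k j := hk
    have hne : tpow A m k j ≠ ⊥ := by
      intro hb
      rw [heq, hb] at h
      simp at h
    obtain ⟨g, hg0, hgm, hgle⟩ := ih k j hne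
    refine ⟨fun t => if t = 0 then i else g (t - 1), by simp, by simp [hgm], ?_⟩
    have hw : weight A (fun t => if t = 0 then i else g (t - 1)) 0 (m+1)
        = A i (g 0) + weight A g 0 m := by
      unfold weight
      rw [Finset.sum_eq_sum_Ico_succ_bot (by omega), Finset.sum_Ico_eq_sum_range]
      simp only [Nat.add_sub_cancel]
      congr 1
      · rw [Finset.range_eq_Ico]
        apply Finset.sum_congr rfl
        intro t _
        rw [if_neg (by omega : ¬ 0 + 1 + t = 0), if_neg (by omega : ¬ 0 + 1 + t + 1 = 0)]
        have e1 : 0 + 1 + t - 1 = t := by omega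
        have e2 : 0 + 1 + t = t + 1 := by omega
        rw [e1, e2]
    rw [hw, heq, hg0]
    exact add_le_add_right hgle _

/-- Splice out the segment `[a, b]` of a walk with a repeated vertex. -/
def splice {n : ℕ} (f : ℕ → Fin n) (a d : ℕ) : ℕ → Fin n :=
  fun k => if k < a then f k else f (k + d)

lemma splice_zero {n : ℕ} (f : ℕ → Fin n) (a b : ℕ) (hab : a < b) (hf : f a = f b) :
    splice f a (b - a) 0 = f 0 := by
  unfold splice
  by_cases h : 0 < a
  · simp [h]
  · have ha : a = 0 := by omega
    subst ha
    rw [if_neg (lt_irrefl 0)]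
    have : 0 + (b - 0) = b := by omega
    rw [this, ← hf]

lemma splice_last {n : ℕ} (f : ℕ → Fin n) (a b m : ℕ) (hab : a < b) (hbm : b ≤ m) :
    splice f a (b - a) (m - (b - a)) = f m := by
  unfold splice
  have h1 : ¬ (m - (b - a) < a) := by omega
  rw [if_neg h1]
  congr 1
  omega

lemma weight_splice {n : ℕ} (A : Fin n → Fin n → R) (f : ℕ → Fin n) (a b m : ℕ)
    (hab : a < b) (hbm : b ≤ m) (hf : f a = f b) :
    weight A f 0 m = weight A (splice f a (b - a)) 0 (m - (b - a)) + weight A f a b := by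
  set d := b - a with hd
  set g := splice f a d with hg
  have hga : weight A g 0 a = weight A f 0 a := by
    unfold weight
    apply Finset.sum_congr rfl
    intro k hk
    simp only [Finset.mem_Ico] at hk
    have hgk : g k = f k := by simp [hg, splice, hk.2]
    have hgk1 : g (k+1) = f (k+1) := by
      by_cases h : k + 1 < a
      · simp [hg, splice, h]
      · have : k + 1 = a := by omega
        rw [this]
        simp only [hg, splice, if_neg (lt_irrefl a)]
        have : a + d = b := by omega
        rw [this, ← hf]
    rw [hgk, hgk1]
  have hgb : weight A g a (m - d) = weight A f b m := by
    have : weight A g a (m - d) = weight A (fun k => f (k + d)) a (m - d) := by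
      unfold weight
      apply Finset.sum_congr rfl
      intro k hk
      simp only [Finset.mem_Ico] at hk
      have hgk : g k = f (k + d) := by simp [hg, splice, not_lt.mpr hk.1]
      have hgk1 : g (k+1) = f (k + 1 + d) := by
        have : ¬ (k + 1 < a) := by omega
        simp [hg, splice, this]
      rw [hgk, hgk1]
    rw [this, weight_shift]
    have h1 : a + d = b := by omega
    have h2 : m - d + d = m := by omega
    rw [h1, h2]
  have hsplit1 : weight A g 0 (m - d) = weight A g 0 a + weight A g a (m - d) := by
    unfold weight
    rw [Finset.sum_Ico_consecutive _ (Nat.zero_le a) (by omega)]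
  have hsplit2 : weight A f 0 m = weight A f 0 a + weight A f a b + weight A f b m := by
    unfold weight
    rw [Finset.sum_Ico_consecutive _ (Nat.zero_le a) (by omega : a ≤ b),
      Finset.sum_Ico_consecutive _ (by omega : (0:ℕ) ≤ b) hbm]
  rw [hsplit2, hsplit1, hga, hgb]
  ac_rfl

lemma pigeonhole {n : ℕ} (hn : 0 < n) (f : ℕ → Fin n) :
    ∃ a b, a < b ∧ b ≤ n ∧ f a = f b := by
  haveI : Nonempty (Fin n) := ⟨⟨0, hn⟩⟩
  have hcard : Fintype.card (Fin n) < Fintype.card (Fin (n+1)) := by simp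
  obtain ⟨x, y, hxy, hfe⟩ := Fintype.exists_ne_map_eq_of_card_lt
    (fun k : Fin (n+1) => f k) hcard
  rcases lt_or_gt_of_ne hxy with h | h
  · exact ⟨x, y, h, Nat.lt_succ_iff.mp y.isLt, hfe⟩
  · exact ⟨y, x, h, Nat.lt_succ_iff.mp x.isLt, hfe.symm⟩

end TropAux

namespace TropAux

lemma shorten_lt {n : ℕ} (hn : 0 < n) (A : Fin n → Fin n → R) :
    ∀ m (i j : Fin n), tpow A m i j ≠ ⊥ → ∃ m' < n, tpow A m' i j ≠ ⊥ := by
  intro m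
  induction m using Nat.strong_induction_on with
  | _ m IH =>
    intro i j h
    by_cases hm : m < n
    · exact ⟨m, hm, h⟩
    · push_neg at hm
      obtain ⟨f, hf0, hfm, hle⟩ := tpow_le_weight A m i j h
      obtain ⟨a, b, hab, hbn, hfab⟩ := pigeonhole hn f
      have hbm : b ≤ m := hbn.trans hm
      have hwne : weight A f 0 m ≠ ⊥ := fun hb => h (le_bot_iff.mp (hb ▸ hle))
      rw [weight_splice A f a b m hab hbm hfab] at hwne
      have hgne : weight A (splice f a (b-a)) 0 (m - (b-a)) ≠ ⊥ := by
        intro hb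
        rw [hb] at hwne
        simp at hwne
      have hle2 : weight A (splice f a (b-a)) 0 (m - (b-a)) ≤ tpow A (m - (b-a)) i j := by
        have h2 := weight_le_tpow A (splice f a (b-a)) (m - (b-a)) 0
        simp only [Nat.zero_add] at h2
        rwa [splice_zero f a b hab hfab, hf0, splice_last f a b m hab hbm, hfm] at h2
      have hne' : tpow A (m - (b-a)) i j ≠ ⊥ := fun hb => hgne (le_bot_iff.mp (hb ▸ hle2))
      exact IH (m - (b-a)) (by omega) i j hne'

lemma shorten_le {n : ℕ} (hn : 0 < n) (A : Fin n → Fin n → R) :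
    ∀ m (i j : Fin n), tpow A m i j ≠ ⊥ →
      ∃ m', m' ≤ n ∧ (1 ≤ m → 1 ≤ m') ∧ tpow A m' i j ≠ ⊥ := by
  intro m
  induction m using Nat.strong_induction_on with
  | _ m IH =>
    intro i j h
    by_cases hm : m ≤ n
    · exact ⟨m, hm, fun h1 => h1, h⟩
    · push_neg at hm
      obtain ⟨f, hf0, hfm, hle⟩ := tpow_le_weight A m i j h
      obtain ⟨a, b, hab, hbn, hfab⟩ := pigeonhole hn f
      have hbm : b ≤ m := by omega
      have hwne : weight A f 0 m ≠ ⊥ := fun hb => h (le_bot_iff.mp (hb ▸ hle))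
      rw [weight_splice A f a b m hab hbm hfab] at hwne
      have hgne : weight A (splice f a (b-a)) 0 (m - (b-a)) ≠ ⊥ := by
        intro hb
        rw [hb] at hwne
        simp at hwne
      have hle2 : weight A (splice f a (b-a)) 0 (m - (b-a)) ≤ tpow A (m - (b-a)) i j := by
        have h2 := weight_le_tpow A (splice f a (b-a)) (m - (b-a)) 0
        simp only [Nat.zero_add] at h2
        rwa [splice_zero f a b hab hfab, hf0, splice_last f a b m hab hbm, hfm] at h2
      have hne' : tpow A (m - (b-a)) i j ≠ ⊥ := fun hb => hgne (le_bot_iff.mp (hb ▸ hle2))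
      obtain ⟨m'', hm''n, hm''1, hm''ne⟩ := IH (m - (b-a)) (by omega) i j hne'
      exact ⟨m'', hm''n, fun _ => hm''1 (by omega), hm''ne⟩

lemma tpow_le_star {n : ℕ} (hn : 0 < n) (B : Fin n → Fin n → R)
    (hC : ∀ k, 1 ≤ k → k ≤ n → ∀ v : Fin n, tpow B k v v ≤ 0) :
    ∀ m (i j : Fin n), tpow B m i j ≤ star B i j := by
  intro m
  induction m using Nat.strong_induction_on with
  | _ m IH =>
    intro i j
    by_cases hm : m < n
    · exact Finset.le_sup (f := fun m => tpow B m i j) (Finset.mem_range.mpr hm)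
    · push_neg at hm
      by_cases hb : tpow B m i j = ⊥
      · rw [hb]; exact bot_le
      obtain ⟨f, hf0, hfm, hle⟩ := tpow_le_weight B m i j hb
      obtain ⟨a, b, hab, hbn, hfab⟩ := pigeonhole hn f
      have hbm : b ≤ m := hbn.trans hm
      rw [weight_splice B f a b m hab hbm hfab] at hle
      have hcyc : weight B f a b ≤ 0 := by
        have h1 := weight_le_tpow B f (b - a) a
        have e : a + (b - a) = b := by omega
        rw [e] at h1
        rw [← hfab] at h1
        exact h1.trans (hC (b-a) (by omega) (by omega) (f a))
      have hg : weight B (splice f a (b-a)) 0 (m - (b-a)) ≤ tpow B (m - (b-a)) i j := by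
        have h2 := weight_le_tpow B (splice f a (b-a)) (m - (b-a)) 0
        simp only [Nat.zero_add] at h2
        rwa [splice_zero f a b hab hfab, hf0, splice_last f a b m hab hbm, hfm] at h2
      calc tpow B m i j ≤ weight B (splice f a (b-a)) 0 (m - (b-a)) + weight B f a b := hle
        _ ≤ tpow B (m - (b-a)) i j + 0 := add_le_add hg hcyc
        _ = tpow B (m - (b-a)) i j := add_zero _
        _ ≤ star B i j := IH (m - (b-a)) (by omega) i j

lemma tpow_shift {n : ℕ} (A : Fin n → Fin n → R) (c : ℝ) :
    ∀ m (i j : Fin n), tpow (fun i j => A i j + (c : R)) m i j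
      = tpow A m i j + (((m : ℝ) * c : ℝ) : R) := by
  intro m
  induction m with
  | zero =>
    intro i j
    show idMat n i j = idMat n i j + (((0:ℕ) * c : ℝ) : R)
    norm_num
  | succ m ih =>
    intro i j
    haveI : Nonempty (Fin n) := ⟨i⟩
    have h1 : ∀ k : Fin n, (A i k + (c:R)) + tpow (fun i j => A i j + (c:R)) m k j
        = (A i k + tpow A m k j) + ((((m:ℕ)+1:ℝ) * c : ℝ) : R) := by
      intro k
      rw [ih k j]
      have h2 : ((((m:ℕ)+1:ℝ) * c : ℝ) : R) = ((c : ℝ) : R) + (((m:ℝ) * c : ℝ) : R) := by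
        rw [← WithBot.coe_add]
        congr 1
        ring
      rw [h2]
      ac_rfl
    show Finset.univ.sup (fun k => (A i k + (c:R)) + tpow (fun i j => A i j + (c:R)) m k j) = _
    rw [Finset.sup_congr rfl fun k _ => h1 k, ← sup_add]
    show tpow A (m+1) i j + _ = tpow A (m+1) i j + _
    congr 2
    push_cast
    ring

lemma tpow_one_le {n : ℕ} (A : Fin n → Fin n → R) (m : ℕ) (i j k : Fin n) :
    A i j + tpow A m j k ≤ tpow A (m + 1) i k :=
  Finset.le_sup (f := fun l => A i l + tpow A m l k) (Finset.mem_univ j)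

lemma add_coe_le_coe {a : R} {r s : ℝ} (h : a + (r : R) ≤ (s : R)) :
    a ≤ ((s - r : ℝ) : R) := by
  induction a using WithBot.recBotCoe with
  | bot => exact bot_le
  | coe t =>
    rw [← WithBot.coe_add, WithBot.coe_le_coe] at h
    exact WithBot.coe_le_coe.mpr (by linarith)

end TropAux

namespace TropAux

lemma specRad_le_quadForm {n : ℕ} (A : Fin n → Fin n → R) (x : Fin n → ℝ) :
    specRad A ≤ quadForm A x := by
  apply Finset.sup_le
  intro m hm
  rw [Finset.mem_Icc] at hm
  obtain ⟨hm1, hmn⟩ := hm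
  rcases hQ : quadForm A x with _ | q
  · -- quadForm = ⊥ : all entries of A are ⊥
    have hAbot : ∀ i j : Fin n, A i j = ⊥ := by
      intro i j
      have h1 : ((-(x i) : ℝ) : R) + A i j + ((x j : ℝ) : R) ≤ quadForm A x :=
        Finset.le_sup (f := fun p : Fin n × Fin n =>
          ((-(x p.1) : ℝ) : R) + A p.1 p.2 + ((x p.2 : ℝ) : R)) (Finset.mem_univ (i, j))
      rw [hQ] at h1
      have h2 := le_bot_iff.mp h1
      rcases WithBot.add_eq_bot.mp h2 with h3 | h3
      · rcases WithBot.add_eq_bot.mp h3 with h4 | h4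
        · exact absurd h4 WithBot.coe_ne_bot
        · exact h4
      · exact absurd h3 WithBot.coe_ne_bot
    obtain ⟨m', rfl⟩ : ∃ m', m = m' + 1 := ⟨m - 1, by omega⟩
    have hpow : ∀ i j : Fin n, tpow A (m' + 1) i j = ⊥ := by
      intro i j
      show Finset.univ.sup (fun k => A i k + tpow A m' k j) = ⊥
      rw [Finset.sup_eq_bot_iff]
      intro k _
      rw [hAbot i k]
      simp
    have httr : ttr (tpow A (m' + 1)) = ⊥ := by
      rw [ttr, Finset.sup_eq_bot_iff]
      exact fun i _ => hpow i i
    rw [httr]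
    simp [troot]
    exact bot_le
  · -- quadForm = ↑q
    have hedge : ∀ i j : Fin n, A i j ≤ ((x i + q - x j : ℝ) : R) := by
      intro i j
      have h1 : ((-(x i) : ℝ) : R) + A i j + ((x j : ℝ) : R) ≤ (q : R) := by
        have h0 : ((-(x i) : ℝ) : R) + A i j + ((x j : ℝ) : R) ≤ quadForm A x :=
          Finset.le_sup (f := fun p : Fin n × Fin n =>
            ((-(x p.1) : ℝ) : R) + A p.1 p.2 + ((x p.2 : ℝ) : R)) (Finset.mem_univ (i, j))
        rw [hQ] at h0
        exact h0
      have h2 := add_coe_le_coe h1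
      rw [add_comm] at h2
      have h3 := add_coe_le_coe h2
      have he : (q - x j - -(x i) : ℝ) = x i + q - x j := by ring
      rwa [he] at h3
    have hkey : ∀ m (i j : Fin n), tpow A m i j ≤ ((x i + m * q - x j : ℝ) : R) := by
      intro m
      induction m with
      | zero =>
        intro i j
        show idMat n i j ≤ _
        by_cases h : i = j
        · subst h
          simp only [idMat, if_pos rfl]
          rw [show (0 : R) = ((0:ℝ) : R) from rfl]
          exact WithBot.coe_le_coe.mpr (by push_cast; norm_num)
        · simp [idMat, h]
      | succ m ih =>
        intro i j
        show Finset.univ.sup (fun k => A i k + tpow A m k j) ≤ _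
        apply Finset.sup_le
        intro k _
        have h4 := add_le_add (hedge i k) (ih k j)
        refine h4.trans ?_
        rw [← WithBot.coe_add]
        exact WithBot.coe_le_coe.mpr (le_of_eq (by push_cast; ring))
    have httr : ttr (tpow A m) ≤ ((m * q : ℝ) : R) := by
      apply Finset.sup_le
      intro i _
      refine (hkey m i i).trans ?_
      apply WithBot.coe_le_coe.mpr
      linarith
    rcases hT : ttr (tpow A m) with _ | r
    · exact bot_le
    · rw [hT] at httr
      have hr : r ≤ m * q := WithBot.coe_le_coe.mp httr
      show ((r / m : ℝ) : R) ≤ (q : R)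
      apply WithBot.coe_le_coe.mpr
      have hm0 : (0:ℝ) < m := by exact_mod_cast hm1
      rw [div_le_iff₀ hm0]
      linarith [hr]

end TropAux

open TropAux in
/-- Extremal property of the tropical spectral radius: for an irreducible matrix `A`,
the minimum of `x⁻ A x` over all regular vectors `x` equals the spectral radius. -/
theorem min_quadForm_eq_specRad {n : ℕ} (hn : 0 < n) (A : Fin n → Fin n → R)
    (hirr : Irred A) :
    IsLeast {t : R | ∃ x : Fin n → ℝ, quadForm A x = t} (specRad A) := by
  constructor
  · -- attainment
    obtain ⟨L, hL⟩ : ∃ L : ℝ, specRad A = (L : R) := by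
      have i0 : Fin n := ⟨0, hn⟩
      obtain ⟨m, hm1, hmne⟩ := hirr i0 i0
      obtain ⟨m', hm'n, hm'1, hm'ne⟩ := shorten_le hn A m i0 i0 hmne
      have h1 : tpow A m' i0 i0 ≤ ttr (tpow A m') :=
        Finset.le_sup (f := fun i => tpow A m' i i) (Finset.mem_univ i0)
      have h2 : ttr (tpow A m') ≠ ⊥ := fun hb => hm'ne (le_bot_iff.mp (hb ▸ h1))
      rcases hT : ttr (tpow A m') with _ | r
      · exact absurd hT h2
      have h3 : ((r / m' : ℝ) : R) ≤ specRad A := by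
        have h4 : troot m' (ttr (tpow A m')) ≤ specRad A :=
          Finset.le_sup (f := fun m => troot m (ttr (tpow A m)))
            (Finset.mem_Icc.mpr ⟨hm'1 hm1, hm'n⟩)
        rw [hT] at h4
        exact h4
      rcases hS : specRad A with _ | L
      · rw [hS] at h3
        exact absurd (le_bot_iff.mp h3) WithBot.coe_ne_bot
      · exact ⟨L, rfl⟩
    set B : Fin n → Fin n → R := fun i j => A i j + ((-L : ℝ) : R) with hB
    have hshift : ∀ m (i j : Fin n),
        tpow B m i j = tpow A m i j + (((m : ℝ) * (-L) : ℝ) : R) := tpow_shift A (-L)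
    have hC : ∀ k, 1 ≤ k → k ≤ n → ∀ v : Fin n, tpow B k v v ≤ 0 := by
      intro k hk1 hkn v
      have h1 : troot k (ttr (tpow A k)) ≤ specRad A :=
        Finset.le_sup (f := fun m => troot m (ttr (tpow A m))) (Finset.mem_Icc.mpr ⟨hk1, hkn⟩)
      rw [hL] at h1
      have h2 : tpow A k v v ≤ (((k : ℝ) * L : ℝ) : R) := by
        have hd : tpow A k v v ≤ ttr (tpow A k) :=
          Finset.le_sup (f := fun i => tpow A k i i) (Finset.mem_univ v)
        rcases hT : ttr (tpow A k) with _ | r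
        · rw [hT] at hd
          exact hd.trans bot_le
        · rw [hT] at hd h1
          have hrk : r / k ≤ L := WithBot.coe_le_coe.mp h1
          have hk0 : (0:ℝ) < k := by exact_mod_cast hk1
          have hrkL : r ≤ (k : ℝ) * L := by
            rw [div_le_iff₀ hk0] at hrk
            linarith
          exact hd.trans (WithBot.coe_le_coe.mpr hrkL)
      rw [hshift k v v]
      calc tpow A k v v + (((k:ℝ) * (-L) : ℝ) : R)
          ≤ (((k:ℝ) * L : ℝ) : R) + (((k:ℝ) * (-L) : ℝ) : R) := add_le_add_left h2 _
        _ = (0 : R) := by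
            rw [← WithBot.coe_add, show ((k:ℝ) * L + (k:ℝ) * (-L) : ℝ) = 0 from by ring]
            rfl
    have j0 : Fin n := ⟨0, hn⟩
    have hstar := tpow_le_star hn B hC
    have hreg : ∀ i : Fin n, star B i j0 ≠ ⊥ := by
      intro i
      obtain ⟨m, hm1, hmne⟩ := hirr i j0
      have hBne : tpow B m i j0 ≠ ⊥ := by
        rw [hshift]
        intro hb
        rcases WithBot.add_eq_bot.mp hb with h | h
        · exact hmne h
        · exact WithBot.coe_ne_bot h
      obtain ⟨m', hm'n, hne'⟩ := shorten_lt hn B m i j0 hBne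
      have hle : tpow B m' i j0 ≤ star B i j0 :=
        Finset.le_sup (f := fun m => tpow B m i j0) (Finset.mem_range.mpr hm'n)
      exact fun hb => hne' (le_bot_iff.mp (hb ▸ hle))
    set x : Fin n → ℝ := fun i => (star B i j0).unbot (hreg i) with hx
    have hxcoe : ∀ i, ((x i : ℝ) : R) = star B i j0 := fun i => WithBot.coe_unbot _ _
    refine ⟨x, le_antisymm ?_ (specRad_le_quadForm A x)⟩
    rw [hL]
    apply Finset.sup_le
    rintro ⟨i, j⟩ -
    show ((-(x i) : ℝ) : R) + A i j + ((x j : ℝ) : R) ≤ (L : R)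
    have key : B i j + star B j j0 ≤ star B i j0 := by
      obtain ⟨m, hmmem, hmeq⟩ := Finset.exists_mem_eq_sup (Finset.range n)
        ⟨0, Finset.mem_range.mpr hn⟩ (fun m => tpow B m j j0)
      show B i j + (Finset.range n).sup (fun m => tpow B m j j0) ≤ star B i j0
      rw [hmeq]
      exact (tpow_one_le B m i j j0).trans (hstar (m+1) i j0)
    rw [← hxcoe i, ← hxcoe j] at key
    have key2 : A i j + ((-L : ℝ) : R) + ((x j : ℝ) : R) ≤ ((x i : ℝ) : R) := key
    rw [add_assoc, ← WithBot.coe_add] at key2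
    have key4 := add_coe_le_coe key2
    calc ((-(x i) : ℝ) : R) + A i j + ((x j : ℝ) : R)
        ≤ ((-(x i) : ℝ) : R) + ((x i - (-L + x j) : ℝ) : R) + ((x j : ℝ) : R) :=
          add_le_add_left (add_le_add_right key4 _) _
      _ = (L : R) := by
          rw [← WithBot.coe_add, ← WithBot.coe_add]
          congr 1
          ring
  · rintro t ⟨x, rfl⟩
    exact specRad_le_quadForm A x
end
end

section
/- (Main theorem, solution set) Under the hypotheses of the constrained problem (A, B n×n max-plus matrices, at least one irreducible, λ > −∞, Tr(B) ≤ 0), with θ as defined, a regular vector x attains the minimum θ of x⁻ A x subject to B x ≤ x if and only if x = (θ⁻¹ A ⊕ B)* u for some regular vector u, where M* = I ⊕ M ⊕ ⋯ ⊕ M^{n−1}. -/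
noncomputable section

/-- The carrier of the max-plus semiring `ℝ_{max,+}`: the reals with `−∞` adjoined,
with tropical addition `⊔ = max` and tropical multiplication `+`. -/
local notation "R" => WithBot ℝ

/-- The product `A B^{i₁} ⋯ A B^{i_k}` for a tuple of exponents `t : Fin k → ℕ`. -/
def prodTup {n k : ℕ} (A B : Fin n → Fin n → R) (t : Fin k → ℕ) : Fin n → Fin n → R :=
  (List.ofFn fun j => tmul A (tpow B (t j))).foldr tmul (idMat n)

/-- The value `θ = ⨁_{k=1}^n ⨁_{0 ≤ i₁+⋯+i_k ≤ n−k} tr^{1/k}(A B^{i₁} ⋯ A B^{i_k})`. -/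
def theta {n : ℕ} (A B : Fin n → Fin n → R) : R :=
  (Finset.Icc 1 n).sup fun k =>
    (Finset.range (n - k + 1)).sup fun s =>
      (Finset.Nat.antidiagonalTuple k s).sup fun t => troot k (ttr (prodTup A B t))


private lemma tadd_max (a x y : R) : a + (x ⊔ y) = (a + x) ⊔ (a + y) := by
  rcases le_total x y with h | h
  · rw [max_eq_right h, max_eq_right (add_le_add_right h a)]
  · rw [max_eq_left h, max_eq_left (add_le_add_right h a)]

private lemma tmax_add (x y a : R) : (x ⊔ y) + a = (x + a) ⊔ (y + a) := by
  rw [add_comm, tadd_max, add_comm x a, add_comm y a]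

private lemma add_finsup {ι : Type*} (s : Finset ι) (f : ι → R) (a : R) :
    a + s.sup f = s.sup fun i => a + f i := by
  simpa [Function.comp_def] using
    Finset.comp_sup_eq_sup_comp (s := s) (f := f) (a + ·) (fun x y => tadd_max a x y) (by simp)

private lemma finsup_add {ι : Type*} (s : Finset ι) (f : ι → R) (a : R) :
    s.sup f + a = s.sup fun i => f i + a := by
  simpa [Function.comp_def] using
    Finset.comp_sup_eq_sup_comp (s := s) (f := f) (· + a) (fun x y => tmax_add x y a) (by simp)

private lemma cancel_coe {a b : R} (r : ℝ) (h : a + (r : R) ≤ b + (r : R)) : a ≤ b :=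
  (WithBot.add_le_add_iff_right (by simp)).mp h

private lemma le_coe_add {r : ℝ} {a b : R} (h : ((-r : ℝ) : R) + a ≤ b) : a ≤ (r : R) + b := by
  have := add_le_add_right h ((r : ℝ) : R)
  rw [← add_assoc, ← WithBot.coe_add] at this
  simpa using this

private lemma coe_add_le {r : ℝ} {a b : R} (h : a ≤ (r : R) + b) : ((-r : ℝ) : R) + a ≤ b := by
  have := add_le_add_right h ((-r : ℝ) : R)
  rw [← add_assoc, ← WithBot.coe_add] at this
  simpa using this
-- chunk2: matrix algebra
section MatAlg
variable {n : ℕ}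

private lemma tmul_apply (A B : Fin n → Fin n → R) (i j : Fin n) :
    tmul A B i j = Finset.univ.sup fun k => A i k + B k j := rfl

private lemma matVec_apply (A : Fin n → Fin n → R) (x : Fin n → R) (i : Fin n) :
    matVec A x i = Finset.univ.sup fun k => A i k + x k := rfl

private lemma tmul_idMat (A : Fin n → Fin n → R) : tmul A (idMat n) = A := by
  funext i j
  apply le_antisymm
  · refine Finset.sup_le fun k _ => ?_
    by_cases h : k = j
    · subst h; simp [idMat]
    · simp [idMat, h]
  · have := Finset.le_sup (f := fun k => A i k + idMat n k j) (Finset.mem_univ j)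
    simpa [idMat, tmul] using this

private lemma idMat_tmul (A : Fin n → Fin n → R) : tmul (idMat n) A = A := by
  funext i j
  apply le_antisymm
  · refine Finset.sup_le fun k _ => ?_
    by_cases h : i = k
    · subst h; simp [idMat]
    · simp [idMat, h]
  · have := Finset.le_sup (f := fun k => idMat n i k + A k j) (Finset.mem_univ i)
    simpa [idMat, tmul] using this

private lemma matVec_idMat (x : Fin n → R) : matVec (idMat n) x = x := by
  funext i
  apply le_antisymm
  · refine Finset.sup_le fun k _ => ?_
    by_cases h : i = k
    · subst h; simp [idMat]
    · simp [idMat, h]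
  · have := Finset.le_sup (f := fun k => idMat n i k + x k) (Finset.mem_univ i)
    simpa [idMat, matVec] using this

private lemma matVec_tmul (A B : Fin n → Fin n → R) (x : Fin n → R) :
    matVec (tmul A B) x = matVec A (matVec B x) := by
  funext i
  rw [matVec_apply, matVec_apply]
  have h1 : ∀ k, tmul A B i k + x k = Finset.univ.sup fun l => A i l + B l k + x k := by
    intro k; rw [tmul_apply, finsup_add]
  have h2 : ∀ l, A i l + matVec B x l = Finset.univ.sup fun k => A i l + (B l k + x k) := by
    intro l; rw [matVec_apply, add_finsup]
  simp only [h1, h2]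
  rw [Finset.sup_comm]
  congr 1; funext l; congr 1; funext k; rw [add_assoc]

private lemma tmul_assoc (A B C : Fin n → Fin n → R) :
    tmul (tmul A B) C = tmul A (tmul B C) := by
  funext i j
  rw [tmul_apply, tmul_apply]
  have h1 : ∀ k, tmul A B i k + C k j = Finset.univ.sup fun l => A i l + B l k + C k j := by
    intro k; rw [tmul_apply, finsup_add]
  have h2 : ∀ l, A i l + tmul B C l j = Finset.univ.sup fun k => A i l + (B l k + C k j) := by
    intro l; rw [tmul_apply, add_finsup]
  simp only [h1, h2]
  rw [Finset.sup_comm]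
  congr 1; funext l; congr 1; funext k; rw [add_assoc]

private lemma matVec_mono_vec {A : Fin n → Fin n → R} {x y : Fin n → R}
    (h : ∀ k, x k ≤ y k) (i : Fin n) : matVec A x i ≤ matVec A y i :=
  Finset.sup_le fun k _ => le_trans (add_le_add_right (h k) _)
    (Finset.le_sup (f := fun k => A i k + y k) (Finset.mem_univ k))

private lemma matVec_mono_mat {A B : Fin n → Fin n → R} {x : Fin n → R}
    (h : ∀ i j, A i j ≤ B i j) (i : Fin n) : matVec A x i ≤ matVec B x i :=
  Finset.sup_le fun k _ => le_trans (add_le_add_left (h i k) _)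
    (Finset.le_sup (f := fun k => B i k + x k) (Finset.mem_univ k))

private lemma ttr_tmul_comm (A B : Fin n → Fin n → R) :
    ttr (tmul A B) = ttr (tmul B A) := by
  unfold ttr
  simp only [tmul_apply]
  rw [Finset.sup_comm]
  congr 1; funext k; congr 1; funext i; rw [add_comm]

private lemma tmul_add_left (A B : Fin n → Fin n → R) (e : R) :
    tmul (fun i j => A i j + e) B = fun i j => tmul A B i j + e := by
  funext i j
  rw [tmul_apply, tmul_apply, finsup_add]
  congr 1; funext k
  rw [add_right_comm]

private lemma tmul_add_right (A B : Fin n → Fin n → R) (e : R) :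
    tmul A (fun i j => B i j + e) = fun i j => tmul A B i j + e := by
  funext i j
  rw [tmul_apply, tmul_apply, finsup_add]
  congr 1; funext k
  rw [add_assoc]

private lemma ttr_add (A : Fin n → Fin n → R) (e : R) :
    ttr (fun i j => A i j + e) = ttr A + e := by
  unfold ttr; rw [finsup_add]

end MatAlg
-- chunk3: prodTup / troot / theta
section ProdTup
variable {n : ℕ}

private lemma prodTup_zero (A B : Fin n → Fin n → R) (t : Fin 0 → ℕ) :
    prodTup A B t = idMat n := by
  unfold prodTup
  simp

private lemma prodTup_cons (A B : Fin n → Fin n → R) {k : ℕ} (t : Fin (k + 1) → ℕ) :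
    prodTup A B t = tmul (tmul A (tpow B (t 0))) (prodTup A B fun j => t j.succ) := by
  unfold prodTup
  rw [List.ofFn_succ]
  rfl

private lemma prodTup_pow (A B : Fin n → Fin n → R) (m : ℕ) :
    prodTup A B (fun _ : Fin m => 0) = tpow A m := by
  induction m with
  | zero => rw [prodTup_zero]; rfl
  | succ m ih =>
    rw [prodTup_cons]
    show tmul (tmul A (idMat n)) _ = _
    rw [tmul_idMat, ih]
    rfl

private lemma troot_bot (k : ℕ) : troot k ⊥ = ⊥ := rfl

private lemma troot_coe (k : ℕ) (r : ℝ) : troot k (r : R) = ((r / k : ℝ) : R) := rfl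

private lemma troot_le_coe {k : ℕ} (hk : 1 ≤ k) {z : R} {c : ℝ} :
    troot k z ≤ (c : R) ↔ z ≤ ((k * c : ℝ) : R) := by
  cases z with
  | bot => simp [troot_bot]
  | coe r =>
    rw [troot_coe, WithBot.coe_le_coe, WithBot.coe_le_coe]
    have hk' : (0 : ℝ) < k := by exact_mod_cast hk
    rw [div_le_iff₀ hk', mul_comm]

private lemma theta_ge {A B : Fin n → Fin n → R} {k s : ℕ} (hk : 1 ≤ k) (hkn : k ≤ n)
    (hs : s ≤ n - k) (t : Fin k → ℕ) (ht : ∑ j, t j = s) :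
    troot k (ttr (prodTup A B t)) ≤ theta A B := by
  unfold theta
  refine le_trans ?_ (Finset.le_sup (Finset.mem_Icc.mpr ⟨hk, hkn⟩))
  refine le_trans ?_ (Finset.le_sup (b := s) (Finset.mem_range.mpr (by omega)))
  exact Finset.le_sup (f := fun t => troot k (ttr (prodTup A B t))) (Finset.Nat.mem_antidiagonalTuple.mpr ht)

private lemma specRad_le_theta (A B : Fin n → Fin n → R) : specRad A ≤ theta A B := by
  unfold specRad
  refine Finset.sup_le fun m hm => ?_
  rw [Finset.mem_Icc] at hm
  rw [← prodTup_pow A B m]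
  exact theta_ge hm.1 hm.2 (Nat.zero_le _) _ (by simp)

private lemma tdiv_coe (a : R) (c : ℝ) : tdiv a (c : R) = a + ((-c : ℝ) : R) := by
  cases a with
  | bot => rfl
  | coe r =>
    show ((r - c : ℝ) : R) = _
    rw [← WithBot.coe_add]
    norm_num [sub_eq_add_neg]

private lemma prodTup_shift (A B : Fin n → Fin n → R) (r : ℝ) :
    ∀ {k : ℕ} (t : Fin k → ℕ) (i j : Fin n),
      prodTup (fun i j => A i j + ((r : ℝ) : R)) B t i j
        = prodTup A B t i j + ((k * r : ℝ) : R) := by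
  intro k
  induction k with
  | zero =>
    intro t i j
    rw [prodTup_zero, prodTup_zero]
    push_cast
    by_cases h : i = j <;> simp [idMat, h]
  | succ k ih =>
    intro t i j
    rw [prodTup_cons, prodTup_cons, tmul_add_left]
    have h2 : (prodTup (fun i j => A i j + ((r : ℝ) : R)) B fun j => t j.succ)
        = fun i j => prodTup A B (fun j => t j.succ) i j + ((k * r : ℝ) : R) := by
      funext i' j'; exact ih _ i' j'
    rw [h2]
    rw [show (fun i j => tmul A (tpow B (t 0)) i j + ((r:ℝ) : R)) = _ from rfl]
    rw [tmul_add_right (fun i j => tmul A (tpow B (t 0)) i j + ((r:ℝ):R)) _ ((k * r : ℝ) : R)]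
    rw [tmul_add_left]
    show tmul (tmul A (tpow B (t 0))) _ i j + _ + _ = _
    rw [add_assoc, ← WithBot.coe_add]
    congr 2
    push_cast; ring

end ProdTup
-- chunk4: lower bound theta ≤ quadForm
section LowerBound
variable {n : ℕ}

private lemma quadForm_term_le (A : Fin n → Fin n → R) (x : Fin n → ℝ) (i j : Fin n) :
    ((-(x i) : ℝ) : R) + A i j + ((x j : ℝ) : R) ≤ quadForm A x :=
  Finset.le_sup (f := fun p : Fin n × Fin n => ((-(x p.1) : ℝ) : R) + A p.1 p.2 + ((x p.2 : ℝ) : R))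
    (Finset.mem_univ (i, j))

private lemma entry_le_quad (A : Fin n → Fin n → R) (x : Fin n → ℝ) (i j : Fin n) :
    A i j + ((x j : ℝ) : R) ≤ quadForm A x + ((x i : ℝ) : R) := by
  have h := quadForm_term_le A x i j
  rw [add_assoc] at h
  have h2 := le_coe_add (r := x i) h
  calc A i j + ((x j : ℝ) : R) ≤ (x i : R) + quadForm A x := h2
    _ = quadForm A x + ((x i : ℝ) : R) := add_comm _ _

private lemma matVec_pow_le {B : Fin n → Fin n → R} {x : Fin n → ℝ}
    (hB : ∀ i, matVec B (vec x) i ≤ vec x i) (m : ℕ) (i : Fin n) :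
    matVec (tpow B m) (vec x) i ≤ vec x i := by
  induction m generalizing i with
  | zero => rw [show tpow B 0 = idMat n from rfl, matVec_idMat]
  | succ m ih =>
    rw [show tpow B (m+1) = tmul B (tpow B m) from rfl, matVec_tmul]
    exact le_trans (matVec_mono_vec ih i) (hB i)

private lemma matVec_add_const (A : Fin n → Fin n → R) (y : Fin n → R) (a : R) (i : Fin n) :
    matVec A (fun k => a + y k) i = a + matVec A y i := by
  rw [matVec_apply, matVec_apply, add_finsup]
  congr 1; funext k
  rw [add_left_comm]

private lemma matVec_A_le {A : Fin n → Fin n → R} {x : Fin n → ℝ} {c : ℝ}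
    (hA : ∀ i j, A i j + ((x j : ℝ) : R) ≤ (c : R) + ((x i : ℝ) : R)) (i : Fin n) :
    matVec A (vec x) i ≤ (c : R) + vec x i :=
  Finset.sup_le fun j _ => hA i j

private lemma matVec_prodTup_le {A B : Fin n → Fin n → R} {x : Fin n → ℝ} {c : ℝ}
    (hB : ∀ i, matVec B (vec x) i ≤ vec x i)
    (hA : ∀ i j, A i j + ((x j : ℝ) : R) ≤ (c : R) + ((x i : ℝ) : R)) :
    ∀ {k : ℕ} (t : Fin k → ℕ) (i : Fin n),
      matVec (prodTup A B t) (vec x) i ≤ ((k * c : ℝ) : R) + vec x i := by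
  intro k
  induction k with
  | zero =>
    intro t i
    rw [prodTup_zero, matVec_idMat]
    push_cast
    simp [vec, ← WithBot.coe_add]
  | succ k ih =>
    intro t i
    rw [prodTup_cons, matVec_tmul, matVec_tmul]
    have s1 : ∀ l, matVec (prodTup A B fun j => t j.succ) (vec x) l
        ≤ (fun l => ((k * c : ℝ) : R) + vec x l) l := fun l => ih _ l
    have s2 : ∀ l, matVec (tpow B (t 0)) (fun l => ((k * c : ℝ) : R) + vec x l) l
        ≤ ((k * c : ℝ) : R) + vec x l := by
      intro l
      rw [matVec_add_const]
      exact add_le_add_right (matVec_pow_le hB _ l) _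
    have s3 : matVec A (fun l => ((k * c : ℝ) : R) + vec x l) i
        ≤ ((k * c : ℝ) : R) + ((c : R) + vec x i) := by
      rw [matVec_add_const]
      exact add_le_add_right (matVec_A_le hA i) _
    calc matVec A (matVec (tpow B (t 0)) (matVec (prodTup A B fun j => t j.succ) (vec x))) i
        ≤ matVec A (matVec (tpow B (t 0)) (fun l => ((k * c : ℝ) : R) + vec x l)) i :=
          matVec_mono_vec (fun l => matVec_mono_vec s1 l) i
      _ ≤ matVec A (fun l => ((k * c : ℝ) : R) + vec x l) i := matVec_mono_vec s2 i
      _ ≤ ((k * c : ℝ) : R) + ((c : R) + vec x i) := s3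
      _ = (((k + 1 : ℕ) * c : ℝ) : R) + vec x i := by
          rw [← add_assoc, ← WithBot.coe_add]
          congr 2
          push_cast; ring

private lemma theta_le_quad {A B : Fin n → Fin n → R} {x : Fin n → ℝ} {c : ℝ}
    (hq : quadForm A x = (c : R))
    (hB : ∀ i, matVec B (vec x) i ≤ vec x i) :
    theta A B ≤ quadForm A x := by
  have hA : ∀ i j, A i j + ((x j : ℝ) : R) ≤ (c : R) + ((x i : ℝ) : R) := by
    intro i j
    have := entry_le_quad A x i j
    rw [hq] at this
    exact this
  rw [hq]
  unfold theta
  refine Finset.sup_le fun k hk => Finset.sup_le fun s hs => Finset.sup_le fun t ht => ?_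
  rw [Finset.mem_Icc] at hk
  rw [troot_le_coe hk.1]
  refine Finset.sup_le fun i _ => ?_
  have h1 : prodTup A B t i i + vec x i ≤ matVec (prodTup A B t) (vec x) i :=
    Finset.le_sup (f := fun l => prodTup A B t i l + vec x l) (Finset.mem_univ i)
  have h2 := le_trans h1 (matVec_prodTup_le hB hA t i)
  exact cancel_coe (x i) (by rw [add_comm ((k * c : ℝ) : R)] at h2; exact le_trans h2 (le_of_eq (add_comm _ _)))

end LowerBound
-- chunk5: non-bot facts and word machinery
section Words
variable {n : ℕ}

private lemma exists_entry_ne_bot {A : Fin n → Fin n → R} (hlam : ⊥ < specRad A) :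
    ∃ i j, A i j ≠ ⊥ := by
  have hs : specRad A ≠ ⊥ := ne_of_gt hlam
  unfold specRad at hs
  rw [ne_eq, Finset.sup_eq_bot_iff] at hs
  push_neg at hs
  obtain ⟨m, hm, hne⟩ := hs
  rw [Finset.mem_Icc] at hm
  have httr : ttr (tpow A m) ≠ ⊥ := by
    intro h; apply hne; rw [h]; rfl
  unfold ttr at httr
  rw [ne_eq, Finset.sup_eq_bot_iff] at httr
  push_neg at httr
  obtain ⟨i, _, hii⟩ := httr
  obtain ⟨m', rfl⟩ : ∃ m', m = m' + 1 := ⟨m - 1, by omega⟩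
  rw [show tpow A (m' + 1) = tmul A (tpow A m') from rfl] at hii
  unfold tmul at hii
  rw [ne_eq, Finset.sup_eq_bot_iff] at hii
  push_neg at hii
  obtain ⟨k, _, hk⟩ := hii
  refine ⟨i, k, fun h => hk ?_⟩
  rw [h, WithBot.bot_add]

private lemma quad_ne_bot {A : Fin n → Fin n → R} (x : Fin n → ℝ) (hlam : ⊥ < specRad A) :
    ∃ c : ℝ, quadForm A x = (c : R) := by
  obtain ⟨i, j, hij⟩ := exists_entry_ne_bot hlam
  have h := quadForm_term_le A x i j
  have hterm : ((-(x i) : ℝ) : R) + A i j + ((x j : ℝ) : R) ≠ ⊥ := by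
    obtain ⟨a, ha⟩ := WithBot.ne_bot_iff_exists.mp hij
    rw [← ha, ← WithBot.coe_add, ← WithBot.coe_add]
    exact WithBot.coe_ne_bot
  have : quadForm A x ≠ ⊥ := fun hb => hterm (le_bot_iff.mp (hb ▸ h))
  obtain ⟨c, hc⟩ := WithBot.ne_bot_iff_exists.mp this
  exact ⟨c, hc.symm⟩

/-- word product -/
private def wordProd (X Y : Fin n → Fin n → R) : List Bool → (Fin n → Fin n → R)
  | [] => idMat n
  | b :: w => tmul (if b then X else Y) (wordProd X Y w)

private lemma wordProd_append (X Y : Fin n → Fin n → R) (w₁ w₂ : List Bool) :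
    wordProd X Y (w₁ ++ w₂) = tmul (wordProd X Y w₁) (wordProd X Y w₂) := by
  induction w₁ with
  | nil => rw [List.nil_append, show wordProd X Y [] = idMat n from rfl, idMat_tmul]
  | cons b w ih =>
    rw [List.cons_append]
    show tmul _ (wordProd X Y (w ++ w₂)) = _
    rw [ih, ← tmul_assoc]
    rfl

private lemma wordProd_replicate (X Y : Fin n → Fin n → R) (m : ℕ) :
    wordProd X Y (List.replicate m false) = tpow Y m := by
  induction m with
  | zero => rfl
  | succ m ih =>
    rw [List.replicate_succ]
    show tmul Y (wordProd X Y (List.replicate m false)) = _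
    rw [ih]; rfl

private lemma count_true_false (w : List Bool) : w.count true + w.count false = w.length := by
  induction w with
  | nil => rfl
  | cons b t ih => cases b <;> simp [List.count_cons] <;> omega

private lemma word_parse_aux : ∀ (N : ℕ) (w : List Bool), w.length ≤ N → w.head? = some true →
    ∃ (k : ℕ) (t : Fin k → ℕ), k = w.count true ∧ (∑ j, t j) = w.count false ∧
      ∀ (X Y : Fin n → Fin n → R), wordProd X Y w = prodTup X Y t := by
  intro N
  induction N with
  | zero => intro w hw hh; cases w with
    | nil => simp at hh
    | cons b w' => simp at hw
  | succ N ihN =>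
    rintro (_ | ⟨b, w'⟩) hw hh
    · simp at hh
    have hb : b = true := by simpa using hh
    subst hb
    set i := (w'.takeWhile (· = false)).length with hi
    have htw : w'.takeWhile (· = false) = List.replicate i false := by
      rw [hi]
      apply List.eq_replicate_of_mem
      intro b hb
      simpa using List.mem_takeWhile_imp hb
    have hsplit : w' = List.replicate i false ++ w'.dropWhile (· = false) := by
      conv_lhs => rw [← List.takeWhile_append_dropWhile (p := (· = false)) (l := w')]
      rw [htw]
    set rest := w'.dropWhile (· = false) with hrest
    rcases eq_or_ne rest [] with hre | hre
    · -- word is true :: false^i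
      refine ⟨1, fun _ => i, ?_, ?_, ?_⟩
      · rw [hsplit, hre]
        simp [List.count_cons, List.count_replicate]
      · rw [hsplit, hre]
        simp [List.count_cons, List.count_replicate]
      · intro X Y
        have : wordProd X Y (true :: w') = tmul X (tpow Y i) := by
          show tmul X (wordProd X Y w') = _
          rw [hsplit, hre, List.append_nil, wordProd_replicate]
        rw [this]
        unfold prodTup
        simp only [List.ofFn_succ, List.ofFn_zero, List.foldr_cons, List.foldr_nil]
        rw [tmul_idMat]
    · -- rest starts with true
      have hre' : w'.dropWhile (· = false) ≠ [] := by rw [← hrest]; exact hre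
      have hresthead : rest.head? = some true := by
        have h3 := List.head_dropWhile_not (p := (· = false)) hre'
        rw [List.head?_eq_head hre]
        congr 1
        simp only [decide_eq_false_iff_not] at h3
        exact Bool.not_eq_false _ ▸ (Bool.ne_false_iff.mp h3)
      have hlen : rest.length ≤ N := by
        have h1 : rest.length ≤ w'.length := (List.dropWhile_sublist _).length_le
        have h2 : w'.length + 1 ≤ N + 1 := by simpa using hw
        omega
      obtain ⟨k', t', hk', ht', hwp⟩ := ihN rest hlen hresthead
      refine ⟨k' + 1, Fin.cons i t', ?_, ?_, ?_⟩
      · rw [hsplit]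
        simp [List.count_cons, List.count_append, List.count_replicate, hk']
      · rw [hsplit]
        rw [Fin.sum_cons, ht']
        simp [List.count_cons, List.count_append, List.count_replicate]
      · intro X Y
        have h1 : wordProd X Y (true :: w') = tmul (tmul X (tpow Y i)) (prodTup X Y t') := by
          show tmul X (wordProd X Y w') = _
          rw [hsplit, wordProd_append, wordProd_replicate, hwp, ← tmul_assoc]
        rw [h1, prodTup_cons]
        simp only [Fin.cons_zero, Fin.cons_succ]

private lemma word_parse (w : List Bool) (hh : w.head? = some true) :
    ∃ (k : ℕ) (t : Fin k → ℕ), k = w.count true ∧ (∑ j, t j) = w.count false ∧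
      ∀ (X Y : Fin n → Fin n → R), wordProd X Y w = prodTup X Y t :=
  word_parse_aux w.length w le_rfl hh

end Words
-- chunk6: rotation, expansion, per-word trace bound
section Rotation
variable {n : ℕ}

private lemma takeWhile_append_of_ex {α : Type*} {p : α → Bool} :
    ∀ (l₁ : List α) (l₂ : List α), (∃ x ∈ l₁, p x = false) →
      (l₁ ++ l₂).takeWhile p = l₁.takeWhile p := by
  intro l₁
  induction l₁ with
  | nil => rintro l₂ ⟨x, hx, _⟩; simp at hx
  | cons a l ih =>
    rintro l₂ ⟨x, hx, hpx⟩
    rw [List.cons_append, List.takeWhile_cons, List.takeWhile_cons]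
    cases hpa : p a with
    | false => simp
    | true =>
      simp only [if_true]
      rcases List.mem_cons.mp hx with rfl | hxl
      · rw [hpa] at hpx; exact absurd hpx (by simp)
      · rw [ih l₂ ⟨x, hxl, hpx⟩]

private lemma wordProd_concat_false (X Y : Fin n → Fin n → R) (w : List Bool) :
    wordProd X Y (w ++ [false]) = tmul (wordProd X Y w) Y := by
  have h : wordProd X Y [false] = Y := tmul_idMat Y
  rw [wordProd_append, h]

private lemma word_rotate_aux : ∀ (r : ℕ) (w : List Bool), true ∈ w →
    (w.takeWhile (· = false)).length = r →
    ∃ w', w'.head? = some true ∧ w'.length = w.length ∧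
      w'.count true = w.count true ∧ w'.count false = w.count false ∧
      ∀ X Y : Fin n → Fin n → R, ttr (wordProd X Y w') = ttr (wordProd X Y w) := by
  intro r
  induction r with
  | zero =>
    rintro (_ | ⟨b, t⟩) hmem htw
    · simp at hmem
    · cases b with
      | false => simp [List.takeWhile_cons] at htw
      | true => exact ⟨true :: t, rfl, rfl, rfl, rfl, fun _ _ => rfl⟩
  | succ r ih =>
    rintro (_ | ⟨b, t⟩) hmem htw
    · simp at hmem
    · cases b with
      | true => simp [List.takeWhile_cons] at htw
      | false =>
        have hmt : true ∈ t := by simpa using hmem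
        have htw' : (t.takeWhile (· = false)).length = r := by
          rw [show (false :: t).takeWhile (· = false) = false :: t.takeWhile (· = false) from by
            simp [List.takeWhile_cons], List.length_cons] at htw
          omega
        have htw2 : ((t ++ [false]).takeWhile (· = false)).length = r := by
          rw [takeWhile_append_of_ex t [false] ⟨true, hmt, by simp⟩]
          exact htw'
        obtain ⟨w', h1, h2, h3, h4, h5⟩ := ih (t ++ [false]) (by simp [hmt]) htw2
        refine ⟨w', h1, ?_, ?_, ?_, ?_⟩
        · rw [h2]; simp
        · rw [h3]; simp [List.count_append, List.count_cons]
        · rw [h4]; simp [List.count_append, List.count_cons]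
        · intro X Y
          rw [h5 X Y, wordProd_concat_false]
          show _ = ttr (tmul Y (wordProd X Y t))
          exact ttr_tmul_comm _ _

private lemma word_rotate (w : List Bool) (hmem : true ∈ w) :
    ∃ w', w'.head? = some true ∧ w'.length = w.length ∧
      w'.count true = w.count true ∧ w'.count false = w.count false ∧
      ∀ X Y : Fin n → Fin n → R, ttr (wordProd X Y w') = ttr (wordProd X Y w) :=
  word_rotate_aux _ w hmem rfl

private lemma tpow_le_words (X Y : Fin n → Fin n → R) :
    ∀ (m : ℕ) (i j : Fin n), tpow (fun i j => X i j ⊔ Y i j) m i j ≤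
      (Finset.univ : Finset (Fin m → Bool)).sup fun w => wordProd X Y (List.ofFn w) i j := by
  intro m
  induction m with
  | zero =>
    intro i j
    have : wordProd X Y (List.ofFn (fun v : Fin 0 => true)) i j = idMat n i j := by
      rw [List.ofFn_zero]; rfl
    exact le_trans (le_of_eq this.symm) (Finset.le_sup (f := fun w => wordProd X Y (List.ofFn w) i j)
      (Finset.mem_univ (fun _ : Fin 0 => true)))
  | succ m ih =>
    intro i j
    show Finset.univ.sup (fun k => (X i k ⊔ Y i k) + tpow _ m k j) ≤ _
    refine Finset.sup_le fun k _ => ?_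
    have h1 : (X i k ⊔ Y i k) + tpow (fun i j => X i j ⊔ Y i j) m k j ≤
        (X i k ⊔ Y i k) + Finset.univ.sup fun w : Fin m → Bool => wordProd X Y (List.ofFn w) k j :=
      add_le_add_right (ih k j) _
    refine le_trans h1 ?_
    rw [add_finsup]
    refine Finset.sup_le fun w _ => ?_
    rw [tmax_add]
    refine sup_le ?_ ?_
    · -- use the word true :: w
      have key : X i k + wordProd X Y (List.ofFn w) k j ≤
          wordProd X Y (List.ofFn (Fin.cons true w)) i j := by
        rw [List.ofFn_succ]
        simp only [Fin.cons_zero, Fin.cons_succ]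
        exact Finset.le_sup (f := fun l => (if true then X else Y) i l + wordProd X Y (List.ofFn w) l j)
          (Finset.mem_univ k)
      exact le_trans key (Finset.le_sup (f := fun w : Fin (m+1) → Bool => wordProd X Y (List.ofFn w) i j)
        (Finset.mem_univ _))
    · have key : Y i k + wordProd X Y (List.ofFn w) k j ≤
          wordProd X Y (List.ofFn (Fin.cons false w)) i j := by
        rw [List.ofFn_succ]
        simp only [Fin.cons_zero, Fin.cons_succ]
        exact Finset.le_sup (f := fun l => (if false then X else Y) i l + wordProd X Y (List.ofFn w) l j)
          (Finset.mem_univ k)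
      exact le_trans key (Finset.le_sup (f := fun w : Fin (m+1) → Bool => wordProd X Y (List.ofFn w) i j)
        (Finset.mem_univ _))

private lemma word_trace_le {A B : Fin n → Fin n → R} {c : ℝ}
    (hθ : theta A B = (c : R)) (hTrB : Tr B ≤ (0 : R)) (w : List Bool)
    (h1 : 1 ≤ w.length) (h2 : w.length ≤ n) :
    ttr (wordProd (fun i j => A i j + ((-c : ℝ) : R)) B w) ≤ 0 := by
  by_cases hmem : true ∈ w
  · obtain ⟨w', hh, hlen, hct, hcf, httr⟩ := word_rotate w hmem
    rw [← httr]
    obtain ⟨k, t, hk, ht, hwp⟩ := word_parse w' hh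
    rw [hwp]
    have hk1 : 1 ≤ k := by
      rw [hk, hct]
      exact List.count_pos_iff.mpr hmem
    have hkn : k ≤ n := by
      have := List.count_le_length (a := true) (l := w')
      omega
    have hsum : k + (∑ j, t j) = w.length := by
      have h5 := count_true_false w
      omega
    have hshift : (fun i j => prodTup (fun i j => A i j + ((-c:ℝ) : R)) B t i j)
        = fun i j => prodTup A B t i j + ((k * -c : ℝ) : R) := by
      funext i j; exact prodTup_shift A B (-c) t i j
    have heq : prodTup (fun i j => A i j + ((-c:ℝ) : R)) B t
        = fun i j => prodTup A B t i j + ((k * -c : ℝ) : R) := hshift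
    rw [heq, ttr_add]
    have hbd : ttr (prodTup A B t) ≤ ((k * c : ℝ) : R) := by
      rw [← troot_le_coe hk1, ← hθ]
      exact theta_ge hk1 hkn (by omega) t rfl
    calc ttr (prodTup A B t) + ((k * -c : ℝ) : R)
        ≤ ((k * c : ℝ) : R) + ((k * -c : ℝ) : R) := add_le_add_left hbd _
      _ = (((k * c + k * -c) : ℝ) : R) := (WithBot.coe_add _ _).symm
      _ = ((0 : ℝ) : R) := by norm_num
      _ = 0 := rfl
  · have hall : w = List.replicate w.length false := by
      apply List.eq_replicate_of_mem
      intro b hb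
      cases b
      · rfl
      · exact absurd hb hmem
    rw [hall, wordProd_replicate]
    refine le_trans ?_ hTrB
    unfold Tr
    exact Finset.le_sup (f := fun m => ttr (tpow B m)) (Finset.mem_Icc.mpr ⟨h1, h2⟩)

private lemma trace_pow_le {A B : Fin n → Fin n → R} {c : ℝ}
    (hθ : theta A B = (c : R)) (hTrB : Tr B ≤ (0 : R)) (m : ℕ)
    (h1 : 1 ≤ m) (h2 : m ≤ n) :
    ttr (tpow (fun i j => (A i j + ((-c : ℝ) : R)) ⊔ B i j) m) ≤ 0 := by
  unfold ttr
  refine Finset.sup_le fun i _ => ?_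
  refine le_trans (tpow_le_words _ B m i i) ?_
  refine Finset.sup_le fun w _ => ?_
  have hlen : (List.ofFn w).length = m := List.length_ofFn (f := w)
  have := word_trace_le hθ hTrB (List.ofFn w) (by omega) (by omega)
  refine le_trans ?_ this
  unfold ttr
  exact Finset.le_sup (f := fun i => wordProd _ B (List.ofFn w) i i) (Finset.mem_univ i)

end Rotation
-- chunk7: walks, cycle removal, S^n ≤ star S
section Walks
variable {n : ℕ}

private def owS (S : Fin n → Fin n → R) : Fin n → List (Fin n) → R
  | _, [] => 0
  | i, k :: l => S i k + owS S k l

private def wkT (S : Fin n → Fin n → R) : Fin n → List (Fin n) → Fin n → R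
  | i, [], j => idMat n i j
  | i, k :: l, j => S i k + wkT S k l j

private lemma wkT_split (S : Fin n → Fin n → R) :
    ∀ (l₁ : List (Fin n)) (i a j : Fin n) (l₂ : List (Fin n)),
      wkT S i (l₁ ++ a :: l₂) j = owS S i (l₁ ++ [a]) + wkT S a l₂ j := by
  intro l₁
  induction l₁ with
  | nil =>
    intro i a j l₂
    show S i a + wkT S a l₂ j = (S i a + 0) + wkT S a l₂ j
    rw [add_zero]
  | cons b l ih =>
    intro i a j l₂
    show S i b + wkT S b (l ++ a :: l₂) j = (S i b + owS S b (l ++ [a])) + wkT S a l₂ j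
    rw [ih b a j l₂, add_assoc]

private lemma owS_le_tpow (S : Fin n → Fin n → R) :
    ∀ (l : List (Fin n)) (i j : Fin n), owS S i (l ++ [j]) ≤ tpow S (l.length + 1) i j := by
  intro l
  induction l with
  | nil =>
    intro i j
    show S i j + 0 ≤ tpow S 1 i j
    rw [add_zero, show tpow S 1 = tmul S (idMat n) from rfl, tmul_idMat]
  | cons k l ih =>
    intro i j
    show S i k + owS S k (l ++ [j]) ≤ tpow S (l.length + 1 + 1) i j
    refine le_trans (add_le_add_right (ih k j) _) ?_
    exact Finset.le_sup (f := fun k => S i k + tpow S (l.length + 1) k j) (Finset.mem_univ k)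

private lemma wkT_le_tpow (S : Fin n → Fin n → R) :
    ∀ (l : List (Fin n)) (i j : Fin n), wkT S i l j ≤ tpow S l.length i j := by
  intro l
  induction l with
  | nil => intro i j; exact le_refl _
  | cons k l ih =>
    intro i j
    show S i k + wkT S k l j ≤ tpow S (l.length + 1) i j
    refine le_trans (add_le_add_right (ih k j) _) ?_
    exact Finset.le_sup (f := fun k => S i k + tpow S l.length k j) (Finset.mem_univ k)

private lemma not_nodup_decomp {α : Type*} :
    ∀ (l : List α), ¬ l.Nodup → ∃ (a : α) (s t u : List α), l = s ++ a :: t ++ a :: u := by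
  intro l
  induction l with
  | nil => intro h; exact absurd List.nodup_nil h
  | cons b l ih =>
    intro h
    rw [List.nodup_cons] at h
    push_neg at h
    by_cases hb : b ∈ l
    · obtain ⟨s, t, rfl⟩ := List.append_of_mem hb
      exact ⟨b, [], s, t, rfl⟩
    · obtain ⟨a, s, t, u, rfl⟩ := ih (h hb)
      exact ⟨a, b :: s, t, u, rfl⟩

private lemma wkT_le_star {S : Fin n → Fin n → R} (hn : 0 < n)
    (htr : ∀ m, 1 ≤ m → m ≤ n → ttr (tpow S m) ≤ 0) :
    ∀ (N : ℕ) (l : List (Fin n)) (i j : Fin n), l.length ≤ N →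
      wkT S i l j ≤ star S i j := by
  intro N
  induction N using Nat.strong_induction_on with
  | _ N ihN =>
    intro l i j hlen
    by_cases hsmall : l.length < n
    · refine le_trans (wkT_le_tpow S l i j) ?_
      exact Finset.le_sup (f := fun m => tpow S m i j) (Finset.mem_range.mpr hsmall)
    · push_neg at hsmall
      -- l.length ≥ n ≥ 1
      have htake : (l.take n).length = n := by
        rw [List.length_take]
        omega
      have hdup : ¬ (i :: l.take n).Nodup := by
        intro hdup
        have := hdup.length_le_card
        simp [htake, Fintype.card_fin] at this
      obtain ⟨a, s, t, u, hdec⟩ := not_nodup_decomp _ hdup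
      have hlen_dec : s.length + t.length + u.length + 2 = n + 1 := by
        have := congrArg List.length hdec
        simp [htake] at this
        omega
      have hcyc : owS S a (t ++ [a]) ≤ 0 := by
        refine le_trans (owS_le_tpow S t a a) ?_
        refine le_trans (Finset.le_sup (f := fun i => tpow S (t.length + 1) i i)
          (Finset.mem_univ a)) ?_
        exact htr (t.length + 1) (by omega) (by omega)
      have hfull : i :: l = s ++ a :: t ++ a :: (u ++ l.drop n) := by
        have : i :: l = (i :: l.take n) ++ l.drop n := by
          rw [List.cons_append, List.take_append_drop]
        rw [this, hdec]
        simp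
      have hNlen : l.length ≤ N := hlen
      cases s with
      | nil =>
        rw [List.nil_append] at hfull
        injection hfull with hi hl
        subst hi
        simp only [List.append_eq, List.append_assoc, List.cons_append] at hl
        rw [hl, wkT_split]
        refine le_trans (le_trans (add_le_add_left hcyc _) (le_of_eq (zero_add _))) ?_
        have hlt : (u ++ l.drop n).length < N := by
          have := congrArg List.length hl
          simp at this
          simp
          omega
        exact ihN (u ++ l.drop n).length hlt _ i j le_rfl
      | cons b s' =>
        rw [List.cons_append] at hfull
        injection hfull with hi hl
        subst hi
        simp only [List.append_eq, List.append_assoc, List.cons_append] at hl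
        rw [hl, wkT_split, wkT_split]
        refine le_trans (add_le_add_right (le_trans (add_le_add_left hcyc _)
          (le_of_eq (zero_add _))) _) ?_
        rw [← wkT_split]
        have hlt : (s' ++ a :: (u ++ l.drop n)).length < N := by
          have := congrArg List.length hl
          simp at this
          simp
          omega
        exact ihN (s' ++ a :: (u ++ l.drop n)).length hlt _ i j le_rfl

private lemma tpow_le_walks (S : Fin n → Fin n → R) :
    ∀ (m : ℕ) (i j : Fin n), tpow S m i j ≤
      (Finset.univ : Finset (Fin m → Fin n)).sup fun v => wkT S i (List.ofFn v) j := by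
  intro m
  induction m with
  | zero =>
    intro i j
    have h0 : wkT S i (List.ofFn (fun v : Fin 0 => v.elim0)) j = idMat n i j := by
      rw [List.ofFn_zero]
      rfl
    exact le_trans (le_of_eq h0.symm)
      (Finset.le_sup (f := fun v => wkT S i (List.ofFn v) j)
        (Finset.mem_univ (fun v : Fin 0 => v.elim0)))
  | succ m ih =>
    intro i j
    show Finset.univ.sup (fun k => S i k + tpow S m k j) ≤ _
    refine Finset.sup_le fun k _ => ?_
    refine le_trans (add_le_add_right (ih k j) _) ?_
    rw [add_finsup]
    refine Finset.sup_le fun v _ => ?_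
    have hkey : S i k + wkT S k (List.ofFn v) j = wkT S i (List.ofFn (Fin.cons k v)) j := by
      rw [List.ofFn_succ]
      simp only [Fin.cons_zero, Fin.cons_succ]
      rfl
    exact le_trans (le_of_eq hkey)
      (Finset.le_sup (f := fun v : Fin (m+1) → Fin n => wkT S i (List.ofFn v) j)
        (Finset.mem_univ _))

private lemma tpow_n_le_star {S : Fin n → Fin n → R} (hn : 0 < n)
    (htr : ∀ m, 1 ≤ m → m ≤ n → ttr (tpow S m) ≤ 0) (i j : Fin n) :
    tpow S n i j ≤ star S i j := by
  refine le_trans (tpow_le_walks S n i j) ?_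
  refine Finset.sup_le fun v _ => ?_
  exact wkT_le_star hn htr n (List.ofFn v) i j (le_of_eq (List.length_ofFn (f := v)))

end Walks
-- chunk8: star lemmas and main theorem
section Star
variable {n : ℕ}

private lemma matVec_star (M : Fin n → Fin n → R) (y : Fin n → R) (i : Fin n) :
    matVec (star M) y i = (Finset.range n).sup fun m => matVec (tpow M m) y i := by
  rw [matVec_apply]
  have h1 : ∀ j, star M i j + y j = (Finset.range n).sup fun m => tpow M m i j + y j := by
    intro j
    exact finsup_add _ _ _
  simp only [h1]
  rw [Finset.sup_comm]
  rfl

private lemma star_fix {M : Fin n → Fin n → R} {x : Fin n → ℝ} (hn : 0 < n)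
    (hM : ∀ i, matVec M (vec x) i ≤ vec x i) (i : Fin n) :
    matVec (star M) (vec x) i = vec x i := by
  apply le_antisymm
  · rw [matVec_star]
    exact Finset.sup_le fun m _ => matVec_pow_le hM m i
  · have h0 : vec x i = idMat n i i + vec x i := by
      simp [idMat]
    have h1 : idMat n i i ≤ star M i i :=
      Finset.le_sup (f := fun m => tpow M m i i) (Finset.mem_range.mpr hn)
    calc vec x i = idMat n i i + vec x i := h0
      _ ≤ star M i i + vec x i := add_le_add_left h1 _
      _ ≤ matVec (star M) (vec x) i :=
        Finset.le_sup (f := fun k => star M i k + vec x k) (Finset.mem_univ i)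

private lemma tmul_star_le {M : Fin n → Fin n → R} (hn : 0 < n)
    (htr : ∀ m, 1 ≤ m → m ≤ n → ttr (tpow M m) ≤ 0) (i j : Fin n) :
    tmul M (star M) i j ≤ star M i j := by
  rw [tmul_apply]
  refine Finset.sup_le fun k _ => ?_
  have h1 : M i k + star M k j = (Finset.range n).sup fun m => M i k + tpow M m k j := by
    unfold _root_.star
    exact add_finsup _ _ _
  rw [h1]
  refine Finset.sup_le fun m hm => ?_
  rw [Finset.mem_range] at hm
  have h2 : M i k + tpow M m k j ≤ tpow M (m + 1) i j :=
    Finset.le_sup (f := fun k => M i k + tpow M m k j) (Finset.mem_univ k)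
  refine le_trans h2 ?_
  rcases lt_or_eq_of_le (Nat.succ_le_of_lt hm) with h | h
  · exact Finset.le_sup (f := fun m => tpow M m i j) (Finset.mem_range.mpr h)
  · rw [Nat.succ_eq_add_one] at h
    rw [h]
    exact tpow_n_le_star hn htr i j

end Star
/-- Main theorem (solution set): a regular vector `x` attains the minimum `θ` of
`x⁻ A x` subject to `B x ≤ x` if and only if `x = (θ⁻¹ A ⊕ B)* u` for some regular `u`. -/
theorem constrained_solution_set {n : ℕ} (hn : 0 < n) (A B : Fin n → Fin n → R)
    (hirr : Irred A ∨ Irred B) (hlam : ⊥ < specRad A) (hTrB : Tr B ≤ (0 : R)) :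
    ∀ x : Fin n → ℝ,
      ((∀ i, matVec B (vec x) i ≤ vec x i) ∧ quadForm A x = theta A B) ↔
        ∃ u : Fin n → ℝ, ∀ i,
          vec x i = matVec (star fun i j => tdiv (A i j) (theta A B) ⊔ B i j) (vec u) i := by
  -- θ is a real number
  have hθbot : ⊥ < theta A B := lt_of_lt_of_le hlam (specRad_le_theta A B)
  obtain ⟨c, hc⟩ := WithBot.ne_bot_iff_exists.mp (ne_of_gt hθbot)
  have hθc : theta A B = (c : R) := hc.symm
  set S : Fin n → Fin n → R := fun i j => tdiv (A i j) (theta A B) ⊔ B i j with hS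
  have hSeq : S = fun i j => (A i j + ((-c : ℝ) : R)) ⊔ B i j := by
    funext i j
    show tdiv (A i j) (theta A B) ⊔ B i j = _
    rw [hθc, tdiv_coe]
  have htr : ∀ m, 1 ≤ m → m ≤ n → ttr (tpow S m) ≤ 0 := by
    rw [hSeq]
    exact fun m h1 h2 => trace_pow_le hθc hTrB m h1 h2
  intro x
  constructor
  · rintro ⟨hB, hq⟩
    have hqc : quadForm A x = (c : R) := hq.trans hθc
    have hSx : ∀ i, matVec S (vec x) i ≤ vec x i := by
      intro i
      refine Finset.sup_le fun j _ => ?_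
      have hsplit : S i j + vec x j
          = (tdiv (A i j) (theta A B) + vec x j) ⊔ (B i j + vec x j) := tmax_add _ _ _
      rw [hsplit]
      refine sup_le ?_ ?_
      · rw [hθc, tdiv_coe]
        have h2 : A i j + ((x j : ℝ) : R) ≤ (c : R) + ((x i : ℝ) : R) := by
          have h := entry_le_quad A x i j
          rw [hqc] at h
          exact h
        have h3 := coe_add_le (r := c) h2
        calc A i j + ((-c : ℝ) : R) + vec x j
            = ((-c : ℝ) : R) + (A i j + ((x j : ℝ) : R)) := by
              rw [add_comm (A i j) _, add_assoc]; rfl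
          _ ≤ ((x i : ℝ) : R) := h3
          _ = vec x i := rfl
      · refine le_trans ?_ (hB i)
        exact Finset.le_sup (f := fun k => B i k + vec x k) (Finset.mem_univ j)
    exact ⟨x, fun i => (star_fix hn hSx i).symm⟩
  · rintro ⟨u, hu⟩
    have hx : vec x = fun i => matVec (star S) (vec u) i := funext hu
    have hSx : ∀ i, matVec S (vec x) i ≤ vec x i := by
      intro i
      rw [hx]
      have h1 : matVec S (fun i => matVec (star S) (vec u) i) i
          = matVec (tmul S (star S)) (vec u) i :=
        (congrFun (matVec_tmul S (star S) (vec u)) i).symm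
      rw [h1]
      exact matVec_mono_mat (fun i j => tmul_star_le hn htr i j) i
    have hB' : ∀ i, matVec B (vec x) i ≤ vec x i := fun i =>
      le_trans (matVec_mono_mat (fun i j => le_sup_right) i) (hSx i)
    have hA' : ∀ i, matVec (fun i j => tdiv (A i j) (theta A B)) (vec x) i ≤ vec x i := fun i =>
      le_trans (matVec_mono_mat (fun i j => le_sup_left) i) (hSx i)
    have hqle : quadForm A x ≤ theta A B := by
      rw [hθc]
      refine Finset.sup_le fun p _ => ?_
      obtain ⟨i, j⟩ := p
      have h1 : tdiv (A i j) (theta A B) + vec x j ≤ vec x i :=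
        le_trans (Finset.le_sup (f := fun k => tdiv (A i k) (theta A B) + vec x k)
          (Finset.mem_univ j)) (hA' i)
      rw [hθc, tdiv_coe] at h1
      have h2 : ((-c : ℝ) : R) + (A i j + ((x j : ℝ) : R)) ≤ ((x i : ℝ) : R) := by
        refine le_trans (le_of_eq ?_) h1
        rw [add_comm ((-c : ℝ) : R), add_right_comm]
        rfl
      have h3 : A i j + ((x j : ℝ) : R) ≤ ((x i : ℝ) : R) + (c : R) := by
        have := le_coe_add (r := c) h2
        refine le_trans this (le_of_eq (add_comm _ _))
      have h4 : A i j + ((x j : ℝ) : R) ≤ ((x i : ℝ) : R) + (c : R) := h3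
      have h5 := coe_add_le (r := x i) (le_trans h4 (le_of_eq rfl))
      calc ((-(x i) : ℝ) : R) + A i j + ((x j : ℝ) : R)
          = ((-(x i) : ℝ) : R) + (A i j + ((x j : ℝ) : R)) := add_assoc _ _ _
        _ ≤ (c : R) := h5
    have hqge : theta A B ≤ quadForm A x := by
      obtain ⟨c', hc'⟩ := quad_ne_bot x hlam
      exact theta_le_quad hc' hB'
    exact ⟨hB', le_antisymm hqle hqge⟩
end
end

section
/- (Unconstrained corollary) Let A be an irreducible n×n matrix over the max-plus semiring with spectral radius λ > −∞. Then the minimum of x⁻ A x over all regular vectors x equals λ, and it is attained exactly at the vectors x = (λ⁻¹ A)* u for regular u. -/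
noncomputable section

/-- The carrier of the max-plus semiring `ℝ_{max,+}`: the reals with `−∞` adjoined,
with tropical addition `⊔ = max` and tropical multiplication `+`. -/
local notation "R" => WithBot ℝ

namespace MaxPlusAux
variable {n : ℕ}

lemma sup_add_c {ι} (s : Finset ι) (f : ι → R) (c : R) :
    s.sup f + c = s.sup fun i => f i + c := by
  refine Finset.comp_sup_eq_sup_comp (· + c) (fun x y => ?_) (WithBot.bot_add c)
  rcases le_total x y with h | h
  · rw [sup_eq_right.2 h, sup_eq_right.2 (add_le_add_left h c)]
  · rw [sup_eq_left.2 h, sup_eq_left.2 (add_le_add_left h c)]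

lemma c_add_sup {ι} (s : Finset ι) (f : ι → R) (c : R) :
    c + s.sup f = s.sup fun i => c + f i := by
  refine Finset.comp_sup_eq_sup_comp (c + ·) (fun x y => ?_) (WithBot.add_bot c)
  rcases le_total x y with h | h
  · rw [sup_eq_right.2 h, sup_eq_right.2 (add_le_add_right h c)]
  · rw [sup_eq_left.2 h, sup_eq_left.2 (add_le_add_right h c)]

/-- weight of the walk `v 0, v 1, …, v m`. -/
def wt (B : Fin n → Fin n → R) (m : ℕ) (v : ℕ → Fin n) : R :=
  ∑ t ∈ Finset.range m, B (v t) (v (t + 1))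

lemma wt_succ (B : Fin n → Fin n → R) (m : ℕ) (v : ℕ → Fin n) :
    wt B (m + 1) v = B (v 0) (v 1) + wt B m (fun t => v (t + 1)) := by
  rw [wt, Finset.sum_range_succ', add_comm]; rfl

lemma wt_le_tpow (B : Fin n → Fin n → R) : ∀ (m : ℕ) (v : ℕ → Fin n),
    wt B m v ≤ tpow B m (v 0) (v m)
  | 0, v => by simp [wt, tpow, idMat]
  | m + 1, v => by
    rw [wt_succ]
    calc B (v 0) (v 1) + wt B m (fun t => v (t + 1))
        ≤ B (v 0) (v 1) + tpow B m (v 1) (v (m + 1)) := by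
          exact add_le_add_right (wt_le_tpow B m (fun t => v (t + 1))) _
      _ ≤ tpow B (m + 1) (v 0) (v (m + 1)) :=
          Finset.le_sup (f := fun k => B (v 0) k + tpow B m k (v (m + 1)))
            (Finset.mem_univ (v 1))

lemma exists_walk (B : Fin n → Fin n → R) (j : Fin n) :
    ∀ (m : ℕ) (i : Fin n), tpow B m i j ≠ ⊥ →
      ∃ v : ℕ → Fin n, v 0 = i ∧ v m = j ∧ tpow B m i j ≤ wt B m v
  | 0, i, h => by
    have hij : i = j := by
      by_contra hne
      simp [tpow, idMat, hne] at h
    exact ⟨fun _ => i, rfl, hij.symm ▸ rfl, by simp [tpow, idMat, hij, wt]⟩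
  | m + 1, i, h => by
    have hne : (Finset.univ : Finset (Fin n)).Nonempty := ⟨i, Finset.mem_univ i⟩
    obtain ⟨k, -, hk⟩ := Finset.exists_mem_eq_sup Finset.univ hne
      (fun k => B i k + tpow B m k j)
    have h1 : tpow B (m + 1) i j = B i k + tpow B m k j := hk
    have h2 : tpow B m k j ≠ ⊥ := by
      intro hb; rw [hb, WithBot.add_bot] at h1; exact h (by rw [h1])
    obtain ⟨v', hv0, hvm, hle⟩ := exists_walk B j m k h2
    refine ⟨fun t => if t = 0 then i else v' (t - 1), rfl, by simpa using hvm, ?_⟩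
    rw [wt_succ]
    simp only [Nat.add_sub_cancel, if_neg (Nat.succ_ne_zero _)]
    rw [h1, hv0]
    exact add_le_add_right (le_trans hle (le_of_eq rfl)) _

end MaxPlusAux
namespace MaxPlusAux
variable {n : ℕ}

lemma tpow_n_le_star (hn : 0 < n) (B : Fin n → Fin n → R)
    (hc : ∀ (j : Fin n) (c : ℕ), 1 ≤ c → c ≤ n → tpow B c j j ≤ 0)
    (i j : Fin n) : tpow B n i j ≤ star B i j := by
  by_cases hb : tpow B n i j = ⊥
  · simp [hb]
  obtain ⟨v, hv0, hvn, hle⟩ := exists_walk B j n i hb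
  -- pigeonhole
  obtain ⟨a, b, hab, heq⟩ := Fintype.exists_ne_map_eq_of_card_lt
    (fun t : Fin (n + 1) => v t) (by simp)
  -- wlog a < b
  obtain ⟨p, q, hpq, hq, hvpq⟩ : ∃ p q : ℕ, p < q ∧ q ≤ n ∧ v p = v q := by
    rcases lt_or_gt_of_ne hab with h | h
    · exact ⟨a, b, h, Nat.lt_succ_iff.1 b.2, heq⟩
    · exact ⟨b, a, h, Nat.lt_succ_iff.1 a.2, heq.symm⟩
  set c := q - p with hc_def
  have hc1 : 1 ≤ c := by omega
  have hcn : c ≤ n := by omega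
  have hpc : p + c = q := by omega
  have hpnc : p ≤ n - c := by omega
  have hncc : n - c + c = n := by omega
  set v' : ℕ → Fin n := fun t => if t < p then v t else v (t + c) with hv'
  have hv'le : ∀ s, s ≤ p → v' s = v s := by
    intro s hs
    rcases lt_or_eq_of_le hs with h | h
    · simp [hv', h]
    · rw [h]
      show (if p < p then v p else v (p + c)) = v p
      rw [if_neg (lt_irrefl p), hpc]
      exact hvpq.symm
  -- split wt B n v
  have hsplit : wt B n v =
      ((∑ t ∈ Finset.Ico 0 p, B (v t) (v (t + 1))) +
        ∑ t ∈ Finset.Ico p q, B (v t) (v (t + 1))) +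
        ∑ t ∈ Finset.Ico q n, B (v t) (v (t + 1)) := by
    rw [wt, Finset.range_eq_Ico,
      ← Finset.sum_Ico_consecutive (fun t => B (v t) (v (t + 1))) (Nat.zero_le q) hq,
      ← Finset.sum_Ico_consecutive (fun t => B (v t) (v (t + 1))) (Nat.zero_le p) hpq.le]
  -- middle part is a cycle, ≤ 0
  have hmid : (∑ t ∈ Finset.Ico p q, B (v t) (v (t + 1))) ≤ 0 := by
    have h1 : (∑ t ∈ Finset.Ico p q, B (v t) (v (t + 1))) = wt B c (fun t => v (p + t)) := by
      rw [Finset.sum_Ico_eq_sum_range, wt]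
      apply Finset.sum_congr rfl
      intro t _
      congr 1 <;> omega
    rw [h1]
    calc wt B c (fun t => v (p + t)) ≤ tpow B c (v (p + 0)) (v (p + c)) :=
          wt_le_tpow B c _
      _ ≤ 0 := by
          rw [add_zero, hpc, ← hvpq]
          exact hc (v p) c hc1 hcn
  -- the spliced walk
  have hsp : wt B (n - c) v' =
      (∑ t ∈ Finset.Ico 0 p, B (v t) (v (t + 1))) +
        ∑ t ∈ Finset.Ico q n, B (v t) (v (t + 1)) := by
    rw [wt, Finset.range_eq_Ico,
      ← Finset.sum_Ico_consecutive (fun t => B (v' t) (v' (t + 1))) (Nat.zero_le p) hpnc]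
    congr 1
    · apply Finset.sum_congr rfl
      intro t ht
      simp only [Finset.mem_Ico] at ht
      rw [hv'le t (le_of_lt ht.2), hv'le (t + 1) ht.2]
    · rw [Finset.sum_Ico_eq_sum_range, Finset.sum_Ico_eq_sum_range]
      have : n - q = n - c - p := by omega
      rw [this]
      apply Finset.sum_congr rfl
      intro t _
      have h1 : v' (p + t) = v (p + t + c) := by
        simp only [hv']
        rw [if_neg (by omega)]
      have h2 : v' (p + t + 1) = v (p + t + 1 + c) := by
        simp only [hv']
        rw [if_neg (by omega)]
      rw [h1, h2]
      congr 2 <;> omega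
  have key : wt B n v ≤ wt B (n - c) v' := by
    rw [hsplit, hsp]
    calc (∑ t ∈ Finset.Ico 0 p, B (v t) (v (t + 1))) +
          (∑ t ∈ Finset.Ico p q, B (v t) (v (t + 1))) +
          ∑ t ∈ Finset.Ico q n, B (v t) (v (t + 1))
        ≤ (∑ t ∈ Finset.Ico 0 p, B (v t) (v (t + 1))) + 0 +
          ∑ t ∈ Finset.Ico q n, B (v t) (v (t + 1)) := by
          exact add_le_add_left (add_le_add_right hmid _) _
      _ = _ := by rw [add_zero]
  have hv'0 : v' 0 = i := by rw [hv'le 0 (Nat.zero_le p), hv0]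
  have hv'end : v' (n - c) = j := by
    simp only [hv']
    rw [if_neg (by omega), hncc, hvn]
  calc tpow B n i j ≤ wt B n v := hle
    _ ≤ wt B (n - c) v' := key
    _ ≤ tpow B (n - c) (v' 0) (v' (n - c)) := wt_le_tpow B _ _
    _ = tpow B (n - c) i j := by rw [hv'0, hv'end]
    _ ≤ star B i j := Finset.le_sup (f := fun m => tpow B m i j)
        (Finset.mem_range.2 (by omega))

lemma tmul_star_le (hn : 0 < n) (B : Fin n → Fin n → R)
    (hc : ∀ (j : Fin n) (c : ℕ), 1 ≤ c → c ≤ n → tpow B c j j ≤ 0)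
    (i k : Fin n) : tmul B (star B) i k ≤ star B i k := by
  refine Finset.sup_le fun j _ => ?_
  show B i j + star B j k ≤ star B i k
  have hst : B i j + _root_.star B j k = (Finset.range n).sup fun m => B i j + tpow B m j k :=
    c_add_sup (Finset.range n) (fun m => tpow B m j k) (B i j)
  rw [hst]
  refine Finset.sup_le fun m hm => ?_
  have h1 : B i j + tpow B m j k ≤ tpow B (m + 1) i k :=
    Finset.le_sup (f := fun j' => B i j' + tpow B m j' k) (Finset.mem_univ j)
  refine le_trans h1 ?_
  rcases lt_or_eq_of_le (Nat.succ_le_of_lt (Finset.mem_range.1 hm)) with h | h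
  · exact Finset.le_sup (f := fun m => tpow B m i k) (Finset.mem_range.2 h)
  · subst h; exact tpow_n_le_star hn B hc i k

end MaxPlusAux
namespace MaxPlusAux
variable {n : ℕ}

lemma tpow_shift (A : Fin n → Fin n → R) (c : ℝ) :
    ∀ (m : ℕ) (i j : Fin n),
      tpow (fun i j => A i j + (c : ℝ)) m i j = tpow A m i j + ((m * c : ℝ) : R)
  | 0, i, j => by
    by_cases h : i = j <;> simp [tpow, idMat, h]
  | m + 1, i, j => by
    show (Finset.univ.sup fun k =>
        (A i k + (c : R)) + tpow (fun i j => A i j + (c : ℝ)) m k j) = _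
    have h1 : ∀ k : Fin n,
        (A i k + (c : R)) + tpow (fun i j => A i j + (c : ℝ)) m k j
          = (A i k + tpow A m k j) + (((m + 1 : ℕ) * c : ℝ) : R) := by
      intro k
      rw [tpow_shift A c m k j]
      have h2 : (((m + 1 : ℕ) * c : ℝ) : R) = ((c : ℝ) : R) + ((m * c : ℝ) : R) := by
        rw [← WithBot.coe_add]
        congr 1
        push_cast; ring
      rw [h2]
      abel
    rw [Finset.sup_congr rfl fun k _ => h1 k, ← sup_add_c]
    rfl

lemma troot_le_inv {c : ℕ} (hc : 1 ≤ c) {t : R} {l : ℝ} (h : troot c t ≤ (l : R)) :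
    t ≤ ((c * l : ℝ) : R) := by
  induction t using WithBot.recBotCoe with
  | bot => exact bot_le
  | coe s =>
    rw [troot, WithBot.map_coe, WithBot.coe_le_coe] at h
    rw [WithBot.coe_le_coe]
    have hc0 : (0 : ℝ) < (c : ℝ) := by exact_mod_cast hc
    rw [div_le_iff₀ hc0] at h
    nlinarith

lemma cycle_le (A : Fin n → Fin n → R) (l : ℝ) (hl : specRad A = (l : R))
    (j : Fin n) (c : ℕ) (hc1 : 1 ≤ c) (hcn : c ≤ n) :
    tpow (fun i j => A i j + ((-l : ℝ) : R)) c j j ≤ 0 := by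
  rw [tpow_shift]
  have h1 : troot c (ttr (tpow A c)) ≤ specRad A :=
    Finset.le_sup (f := fun m => troot m (ttr (tpow A m))) (Finset.mem_Icc.2 ⟨hc1, hcn⟩)
  rw [hl] at h1
  have h2 : tpow A c j j ≤ ((c * l : ℝ) : R) :=
    le_trans (Finset.le_sup (f := fun i => tpow A c i i) (Finset.mem_univ j))
      (troot_le_inv hc1 h1)
  calc tpow A c j j + ((c * (-l) : ℝ) : R)
      ≤ ((c * l : ℝ) : R) + ((c * (-l) : ℝ) : R) := add_le_add_left h2 _
    _ = ((0 : ℝ) : R) := by rw [← WithBot.coe_add]; congr 1; ring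
    _ = 0 := WithBot.coe_zero

lemma specRad_le_quadForm (A : Fin n → Fin n → R) (x : Fin n → ℝ) :
    specRad A ≤ quadForm A x := by
  by_cases hq : quadForm A x = ⊥
  · have hA : ∀ i j, A i j = ⊥ := by
      intro i j
      have h1 : ((-(x i) : ℝ) : R) + A i j + ((x j : ℝ) : R) ≤ quadForm A x :=
        Finset.le_sup (f := fun p : Fin n × Fin n =>
          ((-(x p.1) : ℝ) : R) + A p.1 p.2 + ((x p.2 : ℝ) : R)) (Finset.mem_univ (i, j))
      rw [hq, le_bot_iff] at h1
      rcases eq_or_ne (A i j) ⊥ with h | h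
      · exact h
      · obtain ⟨a, ha⟩ := WithBot.ne_bot_iff_exists.1 h
        rw [← ha, ← WithBot.coe_add, ← WithBot.coe_add] at h1
        exact absurd h1 WithBot.coe_ne_bot
    have hpow : ∀ (m : ℕ) (i j : Fin n), tpow A (m + 1) i j = ⊥ := by
      intro m i j
      show (Finset.univ.sup fun k => A i k + tpow A m k j) = ⊥
      refine le_bot_iff.1 (Finset.sup_le fun k _ => ?_)
      rw [hA i k, WithBot.bot_add]
    rw [hq]
    refine Finset.sup_le fun m hm => ?_
    obtain ⟨hm1, -⟩ := Finset.mem_Icc.1 hm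
    obtain ⟨m', rfl⟩ := Nat.exists_eq_add_of_le hm1
    have httr : ttr (tpow A (1 + m')) = ⊥ := by
      refine le_bot_iff.1 (Finset.sup_le fun i _ => ?_)
      rw [add_comm 1 m', hpow m' i i]
    rw [httr, troot, WithBot.map_bot]
  · obtain ⟨r, hr⟩ := WithBot.ne_bot_iff_exists.1 hq
    have hterm : ∀ i k : Fin n, A i k ≤ ((x i + r - x k : ℝ) : R) := by
      intro i k
      have h1 : ((-(x i) : ℝ) : R) + A i k + ((x k : ℝ) : R) ≤ quadForm A x :=
        Finset.le_sup (f := fun p : Fin n × Fin n =>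
          ((-(x p.1) : ℝ) : R) + A p.1 p.2 + ((x p.2 : ℝ) : R)) (Finset.mem_univ (i, k))
      rw [← hr] at h1
      rcases eq_or_ne (A i k) ⊥ with h | h
      · rw [h]; exact bot_le
      · obtain ⟨a, ha⟩ := WithBot.ne_bot_iff_exists.1 h
        rw [← ha] at h1 ⊢
        rw [← WithBot.coe_add, ← WithBot.coe_add, WithBot.coe_le_coe] at h1
        rw [WithBot.coe_le_coe]
        linarith
    have key : ∀ (m : ℕ) (i j : Fin n), tpow A m i j ≤ ((x i + m * r - x j : ℝ) : R) := by
      intro m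
      induction m with
      | zero =>
        intro i j
        by_cases h : i = j
        · subst h
          show (if i = i then (0 : R) else ⊥) ≤ _
          rw [if_pos rfl]
          rw [show ((x i + (0:ℕ) * r - x i : ℝ) : R) = ((0:ℝ) : R) by norm_num]
          exact le_of_eq WithBot.coe_zero.symm
        · show (if i = j then (0 : R) else ⊥) ≤ _
          rw [if_neg h]; exact bot_le
      | succ m ih =>
        intro i j
        show (Finset.univ.sup fun k => A i k + tpow A m k j) ≤ _
        refine Finset.sup_le fun k _ => ?_
        calc A i k + tpow A m k j
            ≤ ((x i + r - x k : ℝ) : R) + ((x k + m * r - x j : ℝ) : R) :=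
              add_le_add (hterm i k) (ih k j)
          _ = ((x i + (m + 1 : ℕ) * r - x j : ℝ) : R) := by
              rw [← WithBot.coe_add]; congr 1; push_cast; ring
    rw [← hr]
    refine Finset.sup_le fun m hm => ?_
    obtain ⟨hm1, -⟩ := Finset.mem_Icc.1 hm
    have httr : ttr (tpow A m) ≤ ((m * r : ℝ) : R) := by
      refine Finset.sup_le fun i _ => ?_
      calc tpow A m i i ≤ ((x i + m * r - x i : ℝ) : R) := key m i i
        _ = ((m * r : ℝ) : R) := by congr 1; ring
    rcases eq_or_ne (ttr (tpow A m)) ⊥ with hb | hb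
    · rw [hb, troot, WithBot.map_bot]; exact bot_le
    · obtain ⟨s, hs⟩ := WithBot.ne_bot_iff_exists.1 hb
      rw [← hs] at httr ⊢
      rw [troot, WithBot.map_coe, WithBot.coe_le_coe]
      rw [WithBot.coe_le_coe] at httr
      have hm0 : (0 : ℝ) < (m : ℝ) := by exact_mod_cast hm1
      rw [div_le_iff₀ hm0]
      nlinarith [httr]

end MaxPlusAux
namespace MaxPlusAux
variable {n : ℕ}

lemma matVec_mono_mat {A A' : Fin n → Fin n → R} (h : ∀ i j, A i j ≤ A' i j)
    (x : Fin n → R) (i : Fin n) : matVec A x i ≤ matVec A' x i :=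
  Finset.sup_le fun k _ => le_trans (add_le_add_left (h i k) _)
    (Finset.le_sup (f := fun k => A' i k + x k) (Finset.mem_univ k))

lemma matVec_mono_vec (A : Fin n → Fin n → R) {y z : Fin n → R} (h : ∀ k, y k ≤ z k)
    (i : Fin n) : matVec A y i ≤ matVec A z i :=
  Finset.sup_le fun k _ => le_trans (add_le_add_right (h k) _)
    (Finset.le_sup (f := fun k => A i k + z k) (Finset.mem_univ k))

lemma matVec_tmul (A B : Fin n → Fin n → R) (x : Fin n → R) (i : Fin n) :
    matVec (tmul A B) x i = matVec A (matVec B x) i := by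
  show (Finset.univ.sup fun k => (Finset.univ.sup fun j => A i j + B j k) + x k)
      = Finset.univ.sup fun j => A i j + matVec B x j
  calc (Finset.univ.sup fun k => (Finset.univ.sup fun j => A i j + B j k) + x k)
      = Finset.univ.sup fun k => Finset.univ.sup fun j => (A i j + B j k) + x k :=
        Finset.sup_congr rfl fun k _ => sup_add_c _ _ _
    _ = Finset.univ.sup fun j => Finset.univ.sup fun k => (A i j + B j k) + x k :=
        Finset.sup_comm _ _ _
    _ = Finset.univ.sup fun j => A i j + matVec B x j := by
        refine Finset.sup_congr rfl fun j _ => ?_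
        rw [matVec, c_add_sup]
        exact Finset.sup_congr rfl fun k _ => add_assoc _ _ _

lemma matVec_id (x : Fin n → ℝ) (i : Fin n) : matVec (idMat n) (vec x) i = ((x i : ℝ) : R) := by
  refine le_antisymm (Finset.sup_le fun k _ => ?_) ?_
  · by_cases h : i = k
    · subst h
      show (if i = i then (0 : R) else ⊥) + _ ≤ _
      rw [if_pos rfl, zero_add]
      exact le_refl _
    · show (if i = k then (0 : R) else ⊥) + _ ≤ _
      rw [if_neg h, WithBot.bot_add]
      exact bot_le
  · have h1 : idMat n i i + vec x i = ((x i : ℝ) : R) := by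
      show (if i = i then (0 : R) else ⊥) + _ = _
      rw [if_pos rfl, zero_add]; rfl
    exact h1 ▸ Finset.le_sup (f := fun k => idMat n i k + vec x k) (Finset.mem_univ i)

lemma star_fix (hn : 0 < n) (B : Fin n → Fin n → R) (x : Fin n → ℝ)
    (hx : ∀ i, matVec B (vec x) i ≤ vec x i) (i : Fin n) :
    matVec (star B) (vec x) i = vec x i := by
  have hm : ∀ (m : ℕ) (i : Fin n), matVec (tpow B m) (vec x) i ≤ vec x i := by
    intro m
    induction m with
    | zero => intro i; rw [show tpow B 0 = idMat n from rfl, matVec_id]; exact le_refl _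
    | succ m ih =>
      intro i
      rw [show tpow B (m + 1) = tmul B (tpow B m) from rfl, matVec_tmul]
      exact le_trans (matVec_mono_vec B ih i) (hx i)
  refine le_antisymm (Finset.sup_le fun k _ => ?_) ?_
  · show star B i k + vec x k ≤ vec x i
    have h1 : star B i k + vec x k
        = (Finset.range n).sup fun m => tpow B m i k + vec x k := sup_add_c _ _ _
    rw [h1]
    refine Finset.sup_le fun m _ => ?_
    exact le_trans (Finset.le_sup (f := fun k => tpow B m i k + vec x k)
      (Finset.mem_univ k)) (hm m i)
  · calc vec x i = matVec (idMat n) (vec x) i := (matVec_id x i).symm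
      _ ≤ matVec (star B) (vec x) i := by
          refine matVec_mono_mat (fun i j => ?_) (vec x) i
          exact Finset.le_sup (f := fun m => tpow B m i j) (Finset.mem_range.2 hn)

lemma quad_le_of_star (hn : 0 < n) (A : Fin n → Fin n → R) (l : ℝ)
    (hl : specRad A = (l : R)) (x u : Fin n → ℝ)
    (h : ∀ i, vec x i = matVec (star fun i j => A i j + ((-l : ℝ) : R)) (vec u) i) :
    quadForm A x ≤ (l : R) := by
  set B : Fin n → Fin n → R := fun i j => A i j + ((-l : ℝ) : R) with hB
  have hcyc : ∀ (j : Fin n) (c : ℕ), 1 ≤ c → c ≤ n → tpow B c j j ≤ 0 :=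
    fun j c h1 h2 => cycle_le A l hl j c h1 h2
  have key : ∀ i j, B i j + vec x j ≤ vec x i := by
    intro i j
    rw [h j, h i]
    have h1 : B i j + matVec (star B) (vec u) j
        = Finset.univ.sup fun k => B i j + (star B j k + vec u k) := c_add_sup _ _ _
    rw [h1]
    refine Finset.sup_le fun k _ => ?_
    calc B i j + (star B j k + vec u k) = (B i j + star B j k) + vec u k :=
          (add_assoc _ _ _).symm
      _ ≤ tmul B (star B) i k + vec u k := add_le_add_left
          (Finset.le_sup (f := fun j' => B i j' + star B j' k) (Finset.mem_univ j)) _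
      _ ≤ star B i k + vec u k := add_le_add_left (tmul_star_le hn B hcyc i k) _
      _ ≤ matVec (star B) (vec u) i :=
          Finset.le_sup (f := fun k => star B i k + vec u k) (Finset.mem_univ k)
  refine Finset.sup_le fun p _ => ?_
  have h2 := key p.1 p.2
  rcases eq_or_ne (A p.1 p.2) ⊥ with hb | hb
  · rw [hb, WithBot.add_bot, WithBot.bot_add]
    exact bot_le
  · obtain ⟨a, ha⟩ := WithBot.ne_bot_iff_exists.1 hb
    have hBij : B p.1 p.2 = ((a - l : ℝ) : R) := by
      show A p.1 p.2 + ((-l : ℝ) : R) = _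
      rw [← ha, ← WithBot.coe_add]
      exact congrArg _ (by ring)
    rw [hBij] at h2
    have h2' : ((a - l + x p.2 : ℝ) : R) ≤ ((x p.1 : ℝ) : R) := by
      rw [WithBot.coe_add]; exact h2
    rw [WithBot.coe_le_coe] at h2'
    rw [← ha]
    have h4 : ((-(x p.1) : ℝ) : R) + ((a : ℝ) : R) + ((x p.2 : ℝ) : R)
        = ((-(x p.1) + a + x p.2 : ℝ) : R) := by
      rw [WithBot.coe_add, WithBot.coe_add]
    rw [h4, WithBot.coe_le_coe]
    linarith

lemma forward_dir (hn : 0 < n) (A : Fin n → Fin n → R) (l : ℝ)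
    (hl : specRad A = (l : R)) (x : Fin n → ℝ) (h : quadForm A x ≤ (l : R)) (i : Fin n) :
    vec x i = matVec (star fun i j => A i j + ((-l : ℝ) : R)) (vec x) i := by
  set B : Fin n → Fin n → R := fun i j => A i j + ((-l : ℝ) : R) with hB
  refine (star_fix hn B x (fun i => ?_) i).symm
  refine Finset.sup_le fun j _ => ?_
  show B i j + vec x j ≤ vec x i
  rcases eq_or_ne (A i j) ⊥ with hb | hb
  · have : B i j = ⊥ := by
      show A i j + ((-l : ℝ) : R) = ⊥
      rw [hb, WithBot.bot_add]
    rw [this, WithBot.bot_add]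
    exact bot_le
  · obtain ⟨a, ha⟩ := WithBot.ne_bot_iff_exists.1 hb
    have h1 : ((-(x i) : ℝ) : R) + A i j + ((x j : ℝ) : R) ≤ (l : R) :=
      le_trans (Finset.le_sup (f := fun p : Fin n × Fin n =>
        ((-(x p.1) : ℝ) : R) + A p.1 p.2 + ((x p.2 : ℝ) : R)) (Finset.mem_univ (i, j))) h
    rw [← ha, ← WithBot.coe_add, ← WithBot.coe_add, WithBot.coe_le_coe] at h1
    have hBij : B i j = ((a - l : ℝ) : R) := by
      show A i j + ((-l : ℝ) : R) = _
      rw [← ha, ← WithBot.coe_add]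
      exact congrArg _ (by ring)
    rw [hBij]
    show _ + ((x j : ℝ) : R) ≤ ((x i : ℝ) : R)
    rw [← WithBot.coe_add, WithBot.coe_le_coe]
    linarith

lemma tdiv_eq (A : Fin n → Fin n → R) (l : ℝ) :
    (fun i j => tdiv (A i j) ((l : ℝ) : R)) = fun i j => A i j + ((-l : ℝ) : R) := by
  funext i j
  rcases eq_or_ne (A i j) ⊥ with hb | hb
  · rw [hb, WithBot.bot_add]
    rfl
  · obtain ⟨a, ha⟩ := WithBot.ne_bot_iff_exists.1 hb
    rw [← ha]
    show (((l : ℝ) : R).map fun s => a - s) = _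
    rw [WithBot.map_coe, ← WithBot.coe_add]
    exact congrArg _ (by ring)

end MaxPlusAux
/-- Unconstrained corollary: for irreducible `A` with spectral radius `λ > −∞`, the
minimum of `x⁻ A x` over regular vectors equals `λ`, attained exactly at `x = (λ⁻¹ A)* u`. -/
theorem unconstrained_min_eq_specRad {n : ℕ} (hn : 0 < n) (A : Fin n → Fin n → R)
    (hirr : Irred A) (hlam : ⊥ < specRad A) :
    IsLeast {t : R | ∃ x : Fin n → ℝ, quadForm A x = t} (specRad A) ∧
      ∀ x : Fin n → ℝ,
        (quadForm A x = specRad A ↔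
          ∃ u : Fin n → ℝ, ∀ i,
            vec x i = matVec (star fun i j => tdiv (A i j) (specRad A)) (vec u) i) := by
  obtain ⟨l, hl'⟩ := WithBot.ne_bot_iff_exists.1 (ne_bot_of_gt hlam)
  have hl : specRad A = (l : R) := hl'.symm
  have hmat : (fun i j => tdiv (A i j) (specRad A))
      = fun i j => A i j + ((-l : ℝ) : R) := by
    rw [hl]; exact MaxPlusAux.tdiv_eq A l
  constructor
  · constructor
    · -- there is a minimizer
      have hreg : ∀ i : Fin n, (0 : R) ≤
          matVec (star fun i j => A i j + ((-l : ℝ) : R)) (vec (0 : Fin n → ℝ)) i := by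
        intro i
        have h1 : (0 : R) ≤ star (fun i j => A i j + ((-l : ℝ) : R)) i i := by
          calc (0 : R) = tpow (fun i j => A i j + ((-l : ℝ) : R)) 0 i i := by
                show (0 : R) = if i = i then (0 : R) else ⊥
                rw [if_pos rfl]
            _ ≤ _ := Finset.le_sup
                (f := fun m => tpow (fun i j => A i j + ((-l : ℝ) : R)) m i i)
                (Finset.mem_range.2 hn)
        have h0 : vec (0 : Fin n → ℝ) i = (0 : R) := by
          show (((0 : Fin n → ℝ) i : ℝ) : R) = (0 : R)
          rw [Pi.zero_apply, WithBot.coe_zero]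
        calc (0 : R) ≤ star (fun i j => A i j + ((-l : ℝ) : R)) i i := h1
          _ = star (fun i j => A i j + ((-l : ℝ) : R)) i i + vec (0 : Fin n → ℝ) i := by
              rw [h0, add_zero]
          _ ≤ _ := Finset.le_sup
              (f := fun k => star (fun i j => A i j + ((-l : ℝ) : R)) i k
                + vec (0 : Fin n → ℝ) k) (Finset.mem_univ i)
      set x0 : Fin n → ℝ := fun i =>
        (matVec (star fun i j => A i j + ((-l : ℝ) : R)) (vec (0 : Fin n → ℝ)) i).unbotD 0
        with hx0
      have hvx : ∀ i, vec x0 i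
          = matVec (star fun i j => A i j + ((-l : ℝ) : R)) (vec (0 : Fin n → ℝ)) i := by
        intro i
        have hne : matVec (star fun i j => A i j + ((-l : ℝ) : R))
            (vec (0 : Fin n → ℝ)) i ≠ ⊥ := by
          intro hb
          have := hreg i
          rw [hb, le_bot_iff] at this
          exact absurd this (by simp)
        obtain ⟨r, hr⟩ := WithBot.ne_bot_iff_exists.1 hne
        have hx0i : x0 i = r := by
          rw [hx0]
          show (matVec (star fun i j => A i j + ((-l : ℝ) : R))
            (vec (0 : Fin n → ℝ)) i).unbotD 0 = r
          rw [← hr, WithBot.unbotD_coe]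
        rw [← hr]
        show ((x0 i : ℝ) : R) = ((r : ℝ) : R)
        rw [hx0i]
      refine ⟨x0, le_antisymm ?_ (MaxPlusAux.specRad_le_quadForm A x0)⟩
      rw [hl]
      exact MaxPlusAux.quad_le_of_star hn A l hl x0 0 hvx
    · rintro t ⟨x, rfl⟩
      exact MaxPlusAux.specRad_le_quadForm A x
  · intro x
    rw [hmat]
    constructor
    · intro h
      exact ⟨x, fun i => MaxPlusAux.forward_dir hn A l hl x (le_of_eq (h.trans hl)) i⟩
    · rintro ⟨u, hu⟩
      refine le_antisymm ?_ (MaxPlusAux.specRad_le_quadForm A x)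
      rw [hl]
      exact MaxPlusAux.quad_le_of_star hn A l hl x u hu
end
end
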